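/- arXiv:2403.20082 — 7 statements merged into one kernel-verified Lean document; each statement's English description precedes it below -/
import Mathlib

section
/- The Gabor transform of the Fresnel function with Gaussian window: for the window g(y) = (πℏ)^{-d/4} e^{-|y|²/(2ℏ)} and the Fresnel function F₊(y) = (2πiℏ)^{-d/2} e^{i|y|²/(2ℏ)}, one has for all x, ξ ∈ ℝ^d: V_g F₊(x,ξ) = (2πℏ)^{-d/2} (πℏ)^{-d/4} (1+i)^{-d/2} e^{(i/(4ℏ))(|x|² - 2x·ξ - |ξ|²)} e^{-|x-ξ|²/(4ℏ)}. -/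
open MeasureTheory Complex Filter
open scoped RealInnerProductSpace ENNReal Topology

noncomputable section

abbrev Ed (d : ℕ) := EuclideanSpace ℝ (Fin d)

/-- Short-time Fourier transform with parameter ℏ. -/
def STFT (ℏ : ℝ) {d : ℕ} (g f : Ed d → ℂ) (x ξ : Ed d) : ℂ :=
  (((2 * Real.pi * ℏ : ℝ) : ℂ)) ^ (-(d : ℂ) / 2) *
    ∫ y : Ed d, Complex.exp (-(Complex.I / (ℏ : ℂ)) * ((inner ℝ ξ y : ℝ) : ℂ)) * f y *
      (starRingEnd ℂ) (g (y - x))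

/-- The Fresnel function F₊. -/
def Fplus (ℏ : ℝ) (d : ℕ) (y : Ed d) : ℂ :=
  (((2 * Real.pi : ℝ) : ℂ) * Complex.I * (ℏ : ℂ)) ^ (-(d : ℂ) / 2) *
    Complex.exp (Complex.I * ((‖y‖ ^ 2 : ℝ) : ℂ) / (2 * (ℏ : ℂ)))

/-- The M^{∞,1} (Sjöstrand) norm with window g. -/
def Msjo (ℏ : ℝ) {d : ℕ} (g f : Ed d → ℂ) : ℝ≥0∞ :=
  ∫⁻ ξ : Ed d, ⨆ x : Ed d, (‖STFT ℏ g f x ξ‖₊ : ℝ≥0∞)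

/-- Gaussian window with diagonal matrix Q = diag(q). -/
def gwin (ℏ : ℝ) {n : ℕ} (q : Fin n → ℝ) (x : Ed n) : ℂ :=
  (((2 * Real.pi * ℏ : ℝ) : ℂ)) ^ (-(n : ℂ) / 2) *
    Complex.exp (-(((∑ j, q j * (x j) ^ 2 : ℝ)) : ℂ) / (2 * (ℏ : ℂ)))

lemma one_add_I_ne : (1 + Complex.I) ≠ 0 := by
  intro h
  have := congrArg Complex.im h
  simp at this

lemma log_one_add_I_two : Complex.log (1 + Complex.I) + Complex.log (1 + Complex.I)
    = (Real.log 2 : ℂ) + (Real.pi / 2 : ℝ) * Complex.I := by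
  have h1I := one_add_I_ne
  have harg1 : 0 ≤ (1 + Complex.I).arg := Complex.arg_nonneg_iff.2 (by simp)
  have harg2 : (1 + Complex.I).arg ≤ Real.pi / 2 :=
    Complex.arg_le_pi_div_two_iff.2 (Or.inl (by simp))
  have hmul : Complex.log ((1 + Complex.I) * (1 + Complex.I))
      = Complex.log (1 + Complex.I) + Complex.log (1 + Complex.I) := by
    refine Complex.log_mul h1I h1I ⟨?_, ?_⟩
    · have := Real.pi_pos; linarith
    · have := Real.pi_pos; linarith
  have hsq : (1 + Complex.I) * (1 + Complex.I) = ((2 : ℝ) : ℂ) * Complex.I := by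
    have : Complex.I * Complex.I = -1 := Complex.I_mul_I
    push_cast
    ring_nf
    rw [Complex.I_sq]
    ring
  rw [← hmul, hsq, Complex.log_ofReal_mul (by norm_num) Complex.I_ne_zero, Complex.log_I]
  push_cast; ring

lemma const_fact (ℏ : ℝ) (hℏ : 0 < ℏ) (d : ℕ) :
    (((2 * Real.pi : ℝ) : ℂ) * Complex.I * (ℏ : ℂ)) ^ (-(d : ℂ) / 2) *
      (((Real.pi * ℏ : ℝ) : ℂ) * (1 + Complex.I)) ^ ((d : ℂ) / 2) =
    (1 + Complex.I) ^ (-(d : ℂ) / 2) := by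
  have hpi := Real.pi_pos
  have h2 : (0:ℝ) < 2 * Real.pi * ℏ := by positivity
  have h3 : (0:ℝ) < Real.pi * ℏ := by positivity
  have h1I := one_add_I_ne
  have hA : (((2 * Real.pi : ℝ) : ℂ) * Complex.I * (ℏ : ℂ)) = ((2 * Real.pi * ℏ : ℝ) : ℂ) * Complex.I := by
    push_cast; ring
  have hAne : (((2 * Real.pi * ℏ : ℝ) : ℂ) * Complex.I) ≠ 0 :=
    mul_ne_zero (Complex.ofReal_ne_zero.2 h2.ne') Complex.I_ne_zero
  have hBne : (((Real.pi * ℏ : ℝ) : ℂ) * (1 + Complex.I)) ≠ 0 :=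
    mul_ne_zero (Complex.ofReal_ne_zero.2 h3.ne') h1I
  rw [hA, Complex.cpow_def_of_ne_zero hAne, Complex.cpow_def_of_ne_zero hBne,
    Complex.cpow_def_of_ne_zero h1I, ← Complex.exp_add]
  congr 1
  rw [Complex.log_ofReal_mul h2 Complex.I_ne_zero, Complex.log_I,
    Complex.log_ofReal_mul h3 h1I]
  have hlog : (Real.log (2 * Real.pi * ℏ) : ℂ) = (Real.log 2 : ℂ) + (Real.log (Real.pi * ℏ) : ℂ) := by
    rw [← Complex.ofReal_add, ← Real.log_mul (by norm_num) h3.ne']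
    norm_num [mul_assoc]
  rw [hlog]
  have h2L := log_one_add_I_two
  push_cast at h2L ⊢
  linear_combination ((d:ℂ)/2) * h2L

lemma gauss_two {d : ℕ} {b : ℂ} (hb : 0 < b.re) (c1 c2 : ℂ) (w1 w2 : Ed d) :
    ∫ v : Ed d, Complex.exp (-b * ((‖v‖ ^ 2 : ℝ) : ℂ) +
        (c1 * ((inner ℝ w1 v : ℝ) : ℂ) + c2 * ((inner ℝ w2 v : ℝ) : ℂ))) =
      ((Real.pi : ℂ) / b) ^ ((d : ℂ) / 2) *
        Complex.exp ((c1 ^ 2 * ((‖w1‖ ^ 2 : ℝ) : ℂ) +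
          2 * c1 * c2 * ((inner ℝ w1 w2 : ℝ) : ℂ) + c2 ^ 2 * ((‖w2‖ ^ 2 : ℝ) : ℂ)) / (4 * b)) := by
  have hnorm : ∀ {n : ℕ} (u : Ed n), (‖u‖ ^ 2 : ℝ) = ∑ i, u i * u i := by
    intro n u
    rw [EuclideanSpace.norm_sq_eq]
    simp [sq]
  have hinner : ∀ {n : ℕ} (w u : Ed n), (inner ℝ w u : ℝ) = ∑ i, w i * u i := by
    intro n w u; simp [PiLp.inner_apply, mul_comm]
  have hmp := (EuclideanSpace.volume_preserving_symm_measurableEquiv_toLp (Fin d)).symm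
  rw [← hmp.integral_comp (MeasurableEquiv.measurableEmbedding _)]
  have hfun : ∀ v : Fin d → ℝ,
      (fun y : Ed d => Complex.exp (-b * ((‖y‖ ^ 2 : ℝ) : ℂ) +
        (c1 * ((inner ℝ w1 y : ℝ) : ℂ) + c2 * ((inner ℝ w2 y : ℝ) : ℂ))))
        ((MeasurableEquiv.toLp 2 (Fin d → ℝ)).symm.symm v) =
      Complex.exp (-b * ∑ i, ((v i : ℂ)) ^ 2 +
        ∑ i, (c1 * ((w1 i : ℝ) : ℂ) + c2 * ((w2 i : ℝ) : ℂ)) * (v i : ℂ)) := by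
    intro v
    show Complex.exp _ = Complex.exp _
    refine congrArg Complex.exp ?_
    have happ : ∀ i : Fin d,
        ((MeasurableEquiv.toLp 2 (Fin d → ℝ)).symm.symm v : Ed d) i = v i := fun _ => rfl
    rw [hnorm, hinner, hinner]
    simp only [happ]
    push_cast
    simp only [sq, add_mul, Finset.sum_add_distrib, Finset.mul_sum]
    ring_nf
  simp only [hfun]
  rw [GaussianFourier.integral_cexp_neg_mul_sum_add hb]
  simp only [Fintype.card_fin]
  refine congrArg₂ (· * ·) rfl (congrArg Complex.exp ?_)
  refine congrArg₂ (· / ·) ?_ rfl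
  rw [hnorm, hnorm, hinner]
  push_cast
  rw [Finset.sum_congr rfl (fun i (_ : i ∈ Finset.univ) =>
    show (c1 * (w1 i : ℂ) + c2 * (w2 i : ℂ)) ^ 2 =
    c1 ^ 2 * ((w1 i : ℂ) * (w1 i : ℂ)) + 2 * c1 * c2 * ((w1 i : ℂ) * (w2 i : ℂ)) +
    c2 ^ 2 * ((w2 i : ℂ) * (w2 i : ℂ)) from by ring)]
  simp only [Finset.sum_add_distrib, Finset.mul_sum]


/-- explicit Gabor transform of the Fresnel function with Gaussian window. -/
theorem gabor_fresnel_gaussian (ℏ : ℝ) (hℏ : 0 < ℏ) (d : ℕ)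
    (g : Ed d → ℂ)
    (hg : g = fun y => (((Real.pi * ℏ) ^ (-(d : ℝ) / 4) : ℝ) : ℂ) *
      Complex.exp (-((‖y‖ ^ 2 : ℝ) : ℂ) / (2 * (ℏ : ℂ)))) :
    ∀ x ξ : Ed d,
      STFT ℏ g (Fplus ℏ d) x ξ =
        (((2 * Real.pi * ℏ) ^ (-(d : ℝ) / 2) : ℝ) : ℂ) *
        (((Real.pi * ℏ) ^ (-(d : ℝ) / 4) : ℝ) : ℂ) *
        (1 + Complex.I) ^ (-(d : ℂ) / 2) *
        Complex.exp ((Complex.I / (4 * (ℏ : ℂ))) *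
          (((‖x‖ ^ 2 : ℝ) : ℂ) - 2 * ((inner ℝ x ξ : ℝ) : ℂ) - ((‖ξ‖ ^ 2 : ℝ) : ℂ))) *
        Complex.exp (-((‖x - ξ‖ ^ 2 : ℝ) : ℂ) / (4 * (ℏ : ℂ))) := by
  intro x ξ
  have hpi := Real.pi_pos
  have hℏ0 : (ℏ : ℂ) ≠ 0 := Complex.ofReal_ne_zero.2 hℏ.ne'
  have h2 : (0:ℝ) < 2 * Real.pi * ℏ := by positivity
  have h3 : (0:ℝ) < Real.pi * ℏ := by positivity
  set b : ℂ := ((((2*ℏ)⁻¹ : ℝ)) : ℂ) * (1 - Complex.I) with hbdef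
  have hbre : 0 < b.re := by
    rw [hbdef, Complex.re_ofReal_mul]
    simp only [Complex.sub_re, Complex.one_re, Complex.I_re, sub_zero, mul_one]
    positivity
  set c1 : ℂ := 1 / (ℏ : ℂ) with hc1
  set c2 : ℂ := -Complex.I / (ℏ : ℂ) with hc2
  set CF : ℂ := (((2 * Real.pi : ℝ) : ℂ) * Complex.I * (ℏ : ℂ)) ^ (-(d : ℂ) / 2) with hCF
  set r4 : ℂ := (((Real.pi * ℏ) ^ (-(d : ℝ) / 4) : ℝ) : ℂ) with hr4
  set K : ℂ := -((‖x‖ ^ 2 : ℝ) : ℂ) / (2 * (ℏ : ℂ)) with hK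
  have hfun : ∀ y : Ed d,
      Complex.exp (-(Complex.I / (ℏ : ℂ)) * ((inner ℝ ξ y : ℝ) : ℂ)) * Fplus ℏ d y *
        (starRingEnd ℂ) (g (y - x)) =
      (CF * r4 * Complex.exp K) *
        Complex.exp (-b * ((‖y‖ ^ 2 : ℝ) : ℂ) +
          (c1 * ((inner ℝ x y : ℝ) : ℂ) + c2 * ((inner ℝ ξ y : ℝ) : ℂ))) := by
    intro y
    have hconj : (starRingEnd ℂ) (g (y - x)) =
        r4 * Complex.exp (-((‖y - x‖ ^ 2 : ℝ) : ℂ) / (2 * (ℏ : ℂ))) := by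
      rw [hg]
      simp only [map_mul, Complex.conj_ofReal, ← Complex.exp_conj, map_div₀, map_neg,
        Complex.conj_ofReal, map_mul, map_ofNat, hr4]
    rw [hconj, Fplus]
    have hsub : ((‖y - x‖ ^ 2 : ℝ) : ℂ) =
        ((‖y‖ ^ 2 : ℝ) : ℂ) - 2 * ((inner ℝ x y : ℝ) : ℂ) + ((‖x‖ ^ 2 : ℝ) : ℂ) := by
      have h := norm_sub_sq_real y x
      rw [real_inner_comm x y] at h
      exact_mod_cast congrArg (Complex.ofReal) h
    calc Complex.exp (-(Complex.I / (ℏ : ℂ)) * ((inner ℝ ξ y : ℝ) : ℂ)) *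
          (CF * Complex.exp (Complex.I * ((‖y‖ ^ 2 : ℝ) : ℂ) / (2 * (ℏ : ℂ)))) *
          (r4 * Complex.exp (-((‖y - x‖ ^ 2 : ℝ) : ℂ) / (2 * (ℏ : ℂ))))
        = CF * r4 * Complex.exp (-(Complex.I / (ℏ : ℂ)) * ((inner ℝ ξ y : ℝ) : ℂ) +
            Complex.I * ((‖y‖ ^ 2 : ℝ) : ℂ) / (2 * (ℏ : ℂ)) +
            -((‖y - x‖ ^ 2 : ℝ) : ℂ) / (2 * (ℏ : ℂ))) := by
          rw [Complex.exp_add, Complex.exp_add]; ring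
      _ = CF * r4 * Complex.exp (K + (-b * ((‖y‖ ^ 2 : ℝ) : ℂ) +
            (c1 * ((inner ℝ x y : ℝ) : ℂ) + c2 * ((inner ℝ ξ y : ℝ) : ℂ)))) := by
          congr 1
          rw [hsub, hK, hbdef, hc1, hc2]
          push_cast
          field_simp
          ring
      _ = (CF * r4 * Complex.exp K) *
          Complex.exp (-b * ((‖y‖ ^ 2 : ℝ) : ℂ) +
            (c1 * ((inner ℝ x y : ℝ) : ℂ) + c2 * ((inner ℝ ξ y : ℝ) : ℂ))) := by
          rw [Complex.exp_add]; ring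
  rw [STFT]
  rw [integral_congr_ae (ae_of_all _ hfun), MeasureTheory.integral_const_mul _ _, gauss_two hbre c1 c2 x ξ]
  have hπb : ((Real.pi : ℝ) : ℂ) / b = ((Real.pi * ℏ : ℝ) : ℂ) * (1 + Complex.I) := by
    rw [hbdef, div_eq_iff (by
      refine mul_ne_zero (Complex.ofReal_ne_zero.2 (by positivity)) ?_
      intro h
      have := congrArg Complex.im h
      simp at this)]
    push_cast
    have h4 : (Complex.I : ℂ) * Complex.I = -1 := Complex.I_mul_I
    field_simp
    ring_nf
    simp only [Complex.I_sq]
    ring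
  have hpre : (((2 * Real.pi * ℏ) ^ (-(d : ℝ) / 2) : ℝ) : ℂ) =
      (((2 * Real.pi * ℏ : ℝ) : ℂ)) ^ (-(d : ℂ) / 2) := by
    rw [Complex.ofReal_cpow h2.le]
    norm_num
  rw [hπb, hpre]
  -- now pure algebra with cpow atoms and exps
  have hcf := const_fact ℏ hℏ d
  have hQ : K + (c1 ^ 2 * ((‖x‖ ^ 2 : ℝ) : ℂ) +
        2 * c1 * c2 * ((inner ℝ x ξ : ℝ) : ℂ) + c2 ^ 2 * ((‖ξ‖ ^ 2 : ℝ) : ℂ)) / (4 * b) =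
      (Complex.I / (4 * (ℏ : ℂ))) *
          (((‖x‖ ^ 2 : ℝ) : ℂ) - 2 * ((inner ℝ x ξ : ℝ) : ℂ) - ((‖ξ‖ ^ 2 : ℝ) : ℂ)) +
        -((‖x - ξ‖ ^ 2 : ℝ) : ℂ) / (4 * (ℏ : ℂ)) := by
    have hsub2 : ((‖x - ξ‖ ^ 2 : ℝ) : ℂ) =
        ((‖x‖ ^ 2 : ℝ) : ℂ) - 2 * ((inner ℝ x ξ : ℝ) : ℂ) + ((‖ξ‖ ^ 2 : ℝ) : ℂ) := by
      exact_mod_cast congrArg Complex.ofReal (norm_sub_sq_real x ξ)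
    rw [hsub2, hK, hbdef, hc1, hc2]
    have hbne : ((((2*ℏ)⁻¹ : ℝ)) : ℂ) * (1 - Complex.I) ≠ 0 := by
      refine mul_ne_zero (Complex.ofReal_ne_zero.2 (by positivity)) ?_
      intro h; have := congrArg Complex.im h; simp at this
    rw [show ((((2*ℏ)⁻¹ : ℝ)) : ℂ) = (2 * (ℏ:ℂ))⁻¹ from by push_cast; ring]
    have hb4 : (4 * ((2 * (ℏ:ℂ))⁻¹ * (1 - Complex.I)))⁻¹ = (ℏ:ℂ) * (1 + Complex.I) / 4 := by
      refine inv_eq_of_mul_eq_one_left ?_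
      field_simp
      ring_nf
      simp only [Complex.I_sq]
      try ring
    rw [div_eq_mul_inv _ (4 * _), hb4]
    generalize ((‖x‖ ^ 2 : ℝ) : ℂ) = A
    generalize ((inner ℝ x ξ : ℝ) : ℂ) = B
    generalize ((‖ξ‖ ^ 2 : ℝ) : ℂ) = C
    have h1mI : (1 : ℂ) - Complex.I ≠ 0 := by
      intro h; have := congrArg Complex.im h; simp at this
    field_simp [hℏ0]
    ring_nf
    simp only [Complex.I_sq]
    have hu6 : (ℏ:ℂ) ^ 7 * ((ℏ:ℂ)⁻¹) ^ 6 = (ℏ:ℂ) := by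
      field_simp
    have hI3 : Complex.I ^ 3 = -Complex.I := by rw [pow_succ, Complex.I_sq]; ring
    linear_combination (2*C) * hI3
  calc (((2 * Real.pi * ℏ : ℝ) : ℂ)) ^ (-(d : ℂ) / 2) *
        ((CF * r4 * Complex.exp K) *
          ((((Real.pi * ℏ : ℝ) : ℂ) * (1 + Complex.I)) ^ ((d : ℂ) / 2) *
            Complex.exp ((c1 ^ 2 * ((‖x‖ ^ 2 : ℝ) : ℂ) +
              2 * c1 * c2 * ((inner ℝ x ξ : ℝ) : ℂ) + c2 ^ 2 * ((‖ξ‖ ^ 2 : ℝ) : ℂ)) / (4 * b))))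
      = (((2 * Real.pi * ℏ : ℝ) : ℂ)) ^ (-(d : ℂ) / 2) * r4 *
          (CF * (((Real.pi * ℏ : ℝ) : ℂ) * (1 + Complex.I)) ^ ((d : ℂ) / 2)) *
          Complex.exp (K + (c1 ^ 2 * ((‖x‖ ^ 2 : ℝ) : ℂ) +
              2 * c1 * c2 * ((inner ℝ x ξ : ℝ) : ℂ) + c2 ^ 2 * ((‖ξ‖ ^ 2 : ℝ) : ℂ)) / (4 * b)) := by
        rw [Complex.exp_add]; ring
    _ = (((2 * Real.pi * ℏ : ℝ) : ℂ)) ^ (-(d : ℂ) / 2) * r4 * (1 + Complex.I) ^ (-(d : ℂ) / 2) *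
          Complex.exp ((Complex.I / (4 * (ℏ : ℂ))) *
            (((‖x‖ ^ 2 : ℝ) : ℂ) - 2 * ((inner ℝ x ξ : ℝ) : ℂ) - ((‖ξ‖ ^ 2 : ℝ) : ℂ)) +
            -((‖x - ξ‖ ^ 2 : ℝ) : ℂ) / (4 * (ℏ : ℂ))) := by
        rw [hQ, hCF, hcf]
    _ = _ := by
        rw [Complex.exp_add]; ring
end
end

section
/- Schwartz decay of the STFT of the Fresnel function along the anti-diagonal: for every window g in the Schwartz class S(ℝ^d) and every N ∈ ℕ there exists a constant C_N > 0 such that |V_g F₊(x,ξ)| ≤ C_N (1 + |x-ξ|²)^{-N} for all x, ξ ∈ ℝ^d. -/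
open MeasureTheory Complex Filter
open scoped RealInnerProductSpace ENNReal Topology

noncomputable section

variable {E : Type*} [NormedAddCommGroup E] [InnerProductSpace ℝ E]

/-- iterated derivatives of a CLM are bounded by ‖A‖ (1+‖x‖). -/
lemma clm_iteratedFDeriv_bound {F : Type*} [NormedAddCommGroup F] [NormedSpace ℝ F]
    (A : E →L[ℝ] F) (n : ℕ) (x : E) :
    ‖iteratedFDeriv ℝ n (⇑A) x‖ ≤ ‖A‖ * (1 + ‖x‖) := by
  have h1 : (0:ℝ) ≤ ‖A‖ := norm_nonneg _
  match n with
  | 0 =>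
    rw [norm_iteratedFDeriv_zero]
    calc ‖A x‖ ≤ ‖A‖ * ‖x‖ := A.le_opNorm x
    _ ≤ ‖A‖ * (1 + ‖x‖) := by nlinarith [norm_nonneg x]
  | (m+1) =>
    rw [← norm_iteratedFDeriv_fderiv]
    have hfd : fderiv ℝ (⇑A) = fun _ : E => A := by
      ext1 v; exact A.fderiv
    rw [hfd]
    match m with
    | 0 =>
      rw [norm_iteratedFDeriv_zero]
      nlinarith [norm_nonneg x]
    | (k+1) =>
      rw [iteratedFDeriv_const_of_ne (by omega)]
      simp
      positivity

/-- If a bounded smooth function satisfies f' = f • ℓ with ℓ linear, it has temperate growth. -/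
lemma hasTemperateGrowth_of_fderiv_smul {f : E → ℂ}
    (hf : ContDiff ℝ ((⊤ : ℕ∞) : WithTop ℕ∞) f) (hb : ∀ x, ‖f x‖ ≤ 1)
    (L : E →L[ℝ] (E →L[ℝ] ℂ)) (hL : ∀ x, fderiv ℝ f x = f x • L x) :
    Function.HasTemperateGrowth f := by
  have main : ∀ n : ℕ, ∃ C : ℝ, 0 ≤ C ∧ ∀ i ≤ n, ∀ x : E,
      ‖iteratedFDeriv ℝ i f x‖ ≤ C * (1 + ‖x‖) ^ n := by
    intro n
    induction n with
    | zero =>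
      refine ⟨1, zero_le_one, ?_⟩
      intro i hi x
      interval_cases i
      simpa [norm_iteratedFDeriv_zero] using hb x
    | succ n ih =>
      obtain ⟨C, hC0, hC⟩ := ih
      refine ⟨C * (1 + 2 ^ n * ‖L‖), by positivity, ?_⟩
      intro i hi x
      have hx1 : (1:ℝ) ≤ 1 + ‖x‖ := by nlinarith [norm_nonneg x]
      have hxp : (0:ℝ) < 1 + ‖x‖ := by linarith
      rcases Nat.lt_succ_iff_lt_or_eq.mp (Nat.lt_succ_of_le hi) with h | rfl
      · calc ‖iteratedFDeriv ℝ i f x‖ ≤ C * (1 + ‖x‖) ^ n := hC i (Nat.lt_succ_iff.mp h) x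
        _ ≤ C * (1 + ‖x‖) ^ (n+1) := by
            have : (1 + ‖x‖) ^ n ≤ (1 + ‖x‖) ^ (n+1) :=
              pow_le_pow_right₀ hx1 (by omega)
            nlinarith
        _ ≤ C * (1 + 2 ^ n * ‖L‖) * (1 + ‖x‖) ^ (n+1) := by
            have h2 : (0:ℝ) ≤ (1 + ‖x‖) ^ (n+1) := by positivity
            have h3 : (0:ℝ) ≤ 2 ^ n * ‖L‖ := by positivity
            nlinarith [mul_nonneg (mul_nonneg hC0 h3) h2]
      · rw [← norm_iteratedFDeriv_fderiv]
        have hfd : fderiv ℝ f = fun x => f x • L x := funext hL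
        rw [hfd]
        have hsmooth : ContDiff ℝ ((⊤ : ℕ∞) : WithTop ℕ∞) (⇑L) := L.contDiff
        have hbd := norm_iteratedFDeriv_smul_le (𝕜 := ℝ) (N := ((⊤ : ℕ∞) : WithTop ℕ∞))
          hf hsmooth x (n := n) (by exact_mod_cast le_top)
        have hsum : ∑ i ∈ Finset.range (n + 1),
            (n.choose i : ℝ) * ‖iteratedFDeriv ℝ i f x‖ * ‖iteratedFDeriv ℝ (n - i) (⇑L) x‖ ≤
            ∑ i ∈ Finset.range (n + 1),
            (n.choose i : ℝ) * (C * (1 + ‖x‖) ^ n) * (‖L‖ * (1 + ‖x‖)) := by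
          apply Finset.sum_le_sum
          intro i hi
          have h1 := hC i (Nat.lt_succ_iff.mp (Finset.mem_range.mp hi)) x
          have h2 := clm_iteratedFDeriv_bound L (n - i) x
          have h2' : ‖iteratedFDeriv ℝ (n - i) (⇑L) x‖ ≤ ‖L‖ * (1 + ‖x‖) := h2
          gcongr
        have hsum2 : ∑ i ∈ Finset.range (n + 1),
            (n.choose i : ℝ) * (C * (1 + ‖x‖) ^ n) * (‖L‖ * (1 + ‖x‖)) =
            (2:ℝ) ^ n * (C * (1 + ‖x‖) ^ n * (‖L‖ * (1 + ‖x‖))) := by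
          have hch : (∑ i ∈ Finset.range (n+1), (n.choose i : ℝ)) = 2^n := by
            exact_mod_cast congrArg (Nat.cast : ℕ → ℝ) (Nat.sum_range_choose n)
          rw [← hch, Finset.sum_mul]
          exact Finset.sum_congr rfl fun i _ => by ring
        refine le_trans (le_trans hbd hsum) ?_
        rw [hsum2]
        have hLn : (0:ℝ) ≤ ‖L‖ := by positivity
        have h2n : (0:ℝ) ≤ (2:ℝ)^n := by positivity
        have hxn : (0:ℝ) ≤ (1 + ‖x‖)^n := by positivity
        have : (2:ℝ) ^ n * (C * (1 + ‖x‖) ^ n * (‖L‖ * (1 + ‖x‖))) =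
            C * (2 ^ n * ‖L‖) * (1 + ‖x‖) ^ (n+1) := by ring
        rw [this]
        have hfac : C * (2 ^ n * ‖L‖) ≤ C * (1 + 2 ^ n * ‖L‖) := by nlinarith
        have hpos : (0:ℝ) ≤ (1 + ‖x‖) ^ (n+1) := by positivity
        exact mul_le_mul_of_nonneg_right hfac hpos
  refine ⟨hf, fun n => ?_⟩
  obtain ⟨C, hC0, hC⟩ := main n
  exact ⟨n, C, fun x => hC n le_rfl x⟩
variable {E : Type*} [NormedAddCommGroup E] [InnerProductSpace ℝ E]

lemma chirp_hasTemperateGrowth (r : ℝ) :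
    Function.HasTemperateGrowth (fun y : E => Complex.exp ((r:ℂ) * Complex.I * ((‖y‖^2 : ℝ) : ℂ))) := by
  set c : ℂ := (r:ℂ) * Complex.I with hc
  have hsmooth : ContDiff ℝ ((⊤ : ℕ∞) : WithTop ℕ∞)
      (fun y : E => Complex.exp (c * ((‖y‖^2 : ℝ) : ℂ))) := by
    apply Complex.contDiff_exp.comp
    exact contDiff_const.mul (Complex.ofRealCLM.contDiff.comp (contDiff_norm_sq ℝ))
  have hb : ∀ y : E, ‖Complex.exp (c * ((‖y‖^2 : ℝ) : ℂ))‖ ≤ 1 := by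
    intro y
    have he : c * ((‖y‖^2 : ℝ) : ℂ) = ((r * ‖y‖^2 : ℝ) : ℂ) * Complex.I := by
      rw [hc]; push_cast; ring
    rw [he, Complex.norm_exp_ofReal_mul_I]
  set L : E →L[ℝ] (E →L[ℝ] ℂ) :=
    c • ((ContinuousLinearMap.compL ℝ E ℝ ℂ Complex.ofRealCLM).comp
      ((2:ℝ) • (innerSL ℝ (E := E)))) with hLdef
  have hL : ∀ x : E, fderiv ℝ (fun y : E => Complex.exp (c * ((‖y‖^2 : ℝ) : ℂ))) x
      = Complex.exp (c * ((‖x‖^2 : ℝ) : ℂ)) • L x := by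
    intro x
    have h1 : HasFDerivAt (fun y : E => ‖y‖^2) ((2:ℝ) • innerSL ℝ x) x := by
      have h0 := (hasFDerivAt_id x).norm_sq
      have : (2:ℝ) • innerSL ℝ x = 2 • ((innerSL ℝ x).comp (ContinuousLinearMap.id ℝ E)) := by
        ext v; simp [two_smul]
      rw [this]
      simpa using h0
    have h2 : HasFDerivAt (fun y : E => ((‖y‖^2 : ℝ) : ℂ))
        (Complex.ofRealCLM.comp ((2:ℝ) • innerSL ℝ x)) x :=
      Complex.ofRealCLM.hasFDerivAt.comp x h1
    have h3 : HasFDerivAt (fun y : E => c * ((‖y‖^2 : ℝ) : ℂ))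
        (c • (Complex.ofRealCLM.comp ((2:ℝ) • innerSL ℝ x))) x := h2.const_mul c
    have h4 := h3.cexp
    rw [h4.fderiv]
    refine ContinuousLinearMap.ext fun v => ?_
    simp [hLdef]
  exact hasTemperateGrowth_of_fderiv_smul hsmooth hb L hL

lemma schwartz_decay_bound' {E : Type*} [NormedAddCommGroup E] [InnerProductSpace ℝ E]
    (ψ : SchwartzMap E ℂ) (k : ℕ) :
    ∃ D : ℝ, 0 ≤ D ∧ ∀ w : E, (1 + ‖w‖) ^ k * ‖ψ w‖ ≤ D := by
  refine ⟨2 ^ k * (Finset.Iic (k, 0)).sup (fun m => SchwartzMap.seminorm ℝ m.1 m.2) ψ,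
    by positivity, fun w => ?_⟩
  have h := SchwartzMap.one_add_le_sup_seminorm_apply (𝕜 := ℝ) (m := (k, 0))
    le_rfl le_rfl ψ w
  simpa [norm_iteratedFDeriv_zero] using h


open scoped FourierTransform
lemma fresnel_phase_identity (ℏ A B C nu nx : ℝ) (hℏC : ((ℏ:ℝ):ℂ) ≠ 0)
    (hπC : ((Real.pi:ℝ):ℂ) ≠ 0) :
    -(Complex.I/(ℏ:ℂ)) * ((A + B : ℝ) : ℂ) + Complex.I * ((nu + 2*C + nx : ℝ) : ℂ) / (2*(ℏ:ℂ))
    = (((nx/2 - B)/ℏ : ℝ) : ℂ) * Complex.I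
      + ((-2*Real.pi * (-(2*Real.pi*ℏ)⁻¹ * (C - A)) : ℝ) : ℂ) * Complex.I
      + (((2*ℏ)⁻¹ : ℝ) : ℂ) * Complex.I * ((nu : ℝ) : ℂ) := by
  have h2C : ((2:ℝ):ℂ) ≠ 0 := by norm_num
  have hprod : ((2:ℂ) * Real.pi * ℏ) ≠ 0 := by
    simp [hℏC, hπC, Complex.ofReal_ne_zero]
  push_cast
  simp only [inv_eq_one_div]
  field_simp
  ring

set_option maxHeartbeats 1000000 in
/-- Schwartz decay of the STFT of the Fresnel function along the anti-diagonal. -/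
theorem stft_fresnel_antidiagonal_decay (ℏ : ℝ) (hℏ : 0 < ℏ) (d : ℕ)
    (g : SchwartzMap (Ed d) ℂ) (N : ℕ) :
    ∃ C : ℝ, 0 < C ∧ ∀ x ξ : Ed d,
      ‖STFT ℏ (fun y => g y) (Fplus ℏ d) x ξ‖ ≤ C * ((1 + ‖x - ξ‖ ^ 2) ^ N)⁻¹ := by
  have hπ : (0:ℝ) < Real.pi := Real.pi_pos
  have hℏC : ((ℏ:ℝ):ℂ) ≠ 0 := Complex.ofReal_ne_zero.mpr hℏ.ne'
  have hπC : ((Real.pi:ℝ):ℂ) ≠ 0 := Complex.ofReal_ne_zero.mpr hπ.ne'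
  set r : ℝ := (2 * ℏ)⁻¹ with hr
  set c₀ : ℂ := (((2 * Real.pi * ℏ : ℝ) : ℂ)) ^ (-(d : ℂ) / 2) with hc₀
  set c₁ : ℂ := (((2 * Real.pi : ℝ) : ℂ) * Complex.I * (ℏ : ℂ)) ^ (-(d : ℂ) / 2) with hc₁
  have hTG := chirp_hasTemperateGrowth (E := Ed d) r
  set B : ℂ →L[ℝ] ℂ →L[ℝ] ℂ :=
    (ContinuousLinearMap.mul ℝ ℂ).comp (Complex.conjCLE.toContinuousLinearMap) with hB
  set φ : SchwartzMap (Ed d) ℂ := SchwartzMap.bilinLeftCLM B hTG g with hφ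
  have hφap : ∀ u : Ed d,
      φ u = (starRingEnd ℂ) (g u) * Complex.exp ((r:ℂ) * Complex.I * ((‖u‖^2 : ℝ) : ℂ)) := by
    intro u; rfl
  set ψ : SchwartzMap (Ed d) ℂ := SchwartzMap.fourierTransformCLM ℝ φ with hψ
  obtain ⟨D, hD0, hD⟩ := schwartz_decay_bound' ψ (2 * N)
  set K : ℝ := ‖c₀‖ * ‖c₁‖ with hK
  set M : ℝ := max 1 (2 * Real.pi * ℏ) with hM
  refine ⟨K * M ^ (2 * N) * D + 1, by positivity, ?_⟩
  intro x ξ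
  set a : Ed d := x - ξ with ha
  set w : Ed d := (-(2 * Real.pi * ℏ)⁻¹) • a with hw
  set θ : ℝ := (‖x‖^2 / 2 - (inner ℝ ξ x : ℝ)) / ℏ with hθ
  -- pointwise exponent identity
  have key : ∀ u : Ed d,
      -(Complex.I / (ℏ:ℂ)) * ((inner ℝ ξ (u + x) : ℝ) : ℂ)
        + Complex.I * ((‖u + x‖^2 : ℝ) : ℂ) / (2 * (ℏ:ℂ))
      = (θ : ℂ) * Complex.I + ((-2 * Real.pi * (inner ℝ u w : ℝ) : ℝ) : ℂ) * Complex.I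
        + (r:ℂ) * Complex.I * ((‖u‖^2 : ℝ) : ℂ) := by
    intro u
    have h1 : (inner ℝ ξ (u + x) : ℝ) = (inner ℝ u ξ : ℝ) + (inner ℝ ξ x : ℝ) := by
      rw [inner_add_right, real_inner_comm]
    have h2 : ‖u + x‖^2 = ‖u‖^2 + 2 * (inner ℝ u x : ℝ) + ‖x‖^2 := norm_add_sq_real u x
    have h3 : (inner ℝ u w : ℝ) =
        -(2 * Real.pi * ℏ)⁻¹ * ((inner ℝ u x : ℝ) - (inner ℝ u ξ : ℝ)) := by
      rw [hw, real_inner_smul_right, ha, inner_sub_right]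
    rw [h1, h2, h3, hθ, hr]
    exact fresnel_phase_identity ℏ _ _ _ _ _ hℏC hπC
  have hpt : ∀ u : Ed d,
      Complex.exp (-(Complex.I / (ℏ:ℂ)) * ((inner ℝ ξ (u + x) : ℝ) : ℂ)) * Fplus ℏ d (u + x) *
        (starRingEnd ℂ) (g ((u + x) - x))
      = c₁ * (Complex.exp ((θ:ℂ) * Complex.I) *
          (Complex.exp (((-2 * Real.pi * (inner ℝ u w : ℝ) : ℝ) : ℂ) * Complex.I) * φ u)) := by
    intro u
    rw [Fplus, ← hc₁, add_sub_cancel_right, hφap u]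
    rw [show ∀ A B z : ℂ, Complex.exp A * (c₁ * Complex.exp B) * z
        = c₁ * Complex.exp (A + B) * z from fun A B z => by rw [Complex.exp_add]; ring]
    rw [key u]
    rw [Complex.exp_add, Complex.exp_add]
    ring
  -- compute the STFT value
  have hval : STFT ℏ (fun y => g y) (Fplus ℏ d) x ξ
      = c₀ * (c₁ * (Complex.exp ((θ:ℂ) * Complex.I) * ψ w)) := by
    rw [STFT, ← hc₀]
    congr 1
    have h4 : (∫ y : Ed d, Complex.exp (-(Complex.I / (ℏ:ℂ)) * ((inner ℝ ξ y : ℝ) : ℂ)) *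
          Fplus ℏ d y * (starRingEnd ℂ) (g (y - x)))
        = ∫ u : Ed d, Complex.exp (-(Complex.I / (ℏ:ℂ)) * ((inner ℝ ξ (u + x) : ℝ) : ℂ)) *
          Fplus ℏ d (u + x) * (starRingEnd ℂ) (g ((u + x) - x)) :=
      (MeasureTheory.integral_add_right_eq_self _ x).symm
    rw [h4]
    rw [MeasureTheory.integral_congr_ae (Filter.Eventually.of_forall hpt)]
    rw [MeasureTheory.integral_const_mul, MeasureTheory.integral_const_mul]
    congr 2
    have h5 : ψ w = ∫ u : Ed d,
        Complex.exp (((-2 * Real.pi * (inner ℝ u w : ℝ) : ℝ) : ℂ) * Complex.I) * φ u := by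
      rw [hψ]
      rw [SchwartzMap.fourierTransformCLM_apply]
      rw [SchwartzMap.fourier_coe, Real.fourier_eq']
      simp [smul_eq_mul]
    rw [h5]
  have hnorm : ‖STFT ℏ (fun y => g y) (Fplus ℏ d) x ξ‖ = K * ‖ψ w‖ := by
    rw [hval, norm_mul, norm_mul, norm_mul,
      Complex.norm_exp_ofReal_mul_I, one_mul, hK, mul_assoc]
  have hK0 : (0:ℝ) ≤ K := mul_nonneg (norm_nonneg _) (norm_nonneg _)
  have hM1 : (1:ℝ) ≤ M := le_max_left _ _
  have hM2 : 2 * Real.pi * ℏ ≤ M := le_max_right _ _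
  have hM0 : (0:ℝ) ≤ M := le_trans zero_le_one hM1
  have hwn : ‖w‖ = (2 * Real.pi * ℏ)⁻¹ * ‖a‖ := by
    rw [hw, norm_smul, Real.norm_eq_abs, abs_neg, abs_of_pos (by positivity)]
  have haw : ‖a‖ = (2 * Real.pi * ℏ) * ‖w‖ := by
    rw [hwn]; field_simp
  have h2 : (1 + ‖a‖ ^ 2) ^ N ≤ (1 + ‖a‖) ^ (2 * N) := by
    have hineq1 : 1 + ‖a‖ ^ 2 ≤ (1 + ‖a‖) ^ 2 := by nlinarith [norm_nonneg a]
    calc (1 + ‖a‖ ^ 2) ^ N ≤ ((1 + ‖a‖) ^ 2) ^ N :=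
      pow_le_pow_left₀ (by positivity) hineq1 N
    _ = (1 + ‖a‖) ^ (2 * N) := by rw [← pow_mul, mul_comm]
  have h3 : 1 + ‖a‖ ≤ M * (1 + ‖w‖) := by
    rw [haw]
    calc 1 + (2 * Real.pi * ℏ) * ‖w‖ ≤ M + M * ‖w‖ :=
      add_le_add hM1 (mul_le_mul_of_nonneg_right hM2 (norm_nonneg w))
    _ = M * (1 + ‖w‖) := by ring
  have h4 : (1 + ‖a‖) ^ (2 * N) ≤ M ^ (2 * N) * (1 + ‖w‖) ^ (2 * N) := by
    calc (1 + ‖a‖) ^ (2 * N) ≤ (M * (1 + ‖w‖)) ^ (2 * N) :=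
      pow_le_pow_left₀ (by positivity) h3 (2 * N)
    _ = M ^ (2 * N) * (1 + ‖w‖) ^ (2 * N) := mul_pow _ _ _
  have ht : (0:ℝ) < (1 + ‖a‖ ^ 2) ^ N := by positivity
  rw [← div_eq_mul_inv, le_div_iff₀ ht]
  calc ‖STFT ℏ (fun y => g y) (Fplus ℏ d) x ξ‖ * (1 + ‖a‖ ^ 2) ^ N
      = K * ‖ψ w‖ * (1 + ‖a‖ ^ 2) ^ N := by rw [hnorm]
    _ ≤ K * ‖ψ w‖ * (1 + ‖a‖) ^ (2 * N) :=
        mul_le_mul_of_nonneg_left h2 (mul_nonneg hK0 (norm_nonneg _))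
    _ ≤ K * ‖ψ w‖ * (M ^ (2 * N) * (1 + ‖w‖) ^ (2 * N)) :=
        mul_le_mul_of_nonneg_left h4 (mul_nonneg hK0 (norm_nonneg _))
    _ = K * (M ^ (2 * N) * ((1 + ‖w‖) ^ (2 * N) * ‖ψ w‖)) := by ring
    _ ≤ K * (M ^ (2 * N) * D) :=
        mul_le_mul_of_nonneg_left
          (mul_le_mul_of_nonneg_left (hD w) (pow_nonneg hM0 _)) hK0
    _ = K * M ^ (2 * N) * D := by ring
    _ ≤ K * M ^ (2 * N) * D + 1 := le_add_of_nonneg_right zero_le_one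
end
end

section
/- Uniform dilation bound: let φ ∈ S(ℝ^d), g ∈ S(ℝ^d), and for 0 < ε < 1 set φ_ε(y) = φ(εy). Then for every N ∈ ℕ there exists C_N > 0, independent of ε, such that sup_{x ∈ ℝ^d} |V_g φ_ε(x,ξ)| ≤ C_N (1+|ξ|²)^{-N} for all ξ ∈ ℝ^d. -/
open MeasureTheory Complex Filter
open scoped RealInnerProductSpace ENNReal Topology FourierTransform

noncomputable section

/-- Iterated derivative of a translate of a smooth function. -/
lemma my_iteratedFDeriv_comp_sub {E F : Type*} [NormedAddCommGroup E] [NormedSpace ℝ E]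
    [NormedAddCommGroup F] [NormedSpace ℝ F] {f : E → F} (hf : ContDiff ℝ (⊤ : ℕ∞) f)
    (x : E) (n : ℕ) :
    iteratedFDeriv ℝ n (fun y => f (y - x)) = fun y => iteratedFDeriv ℝ n f (y - x) := by
  induction n with
  | zero =>
    funext y
    ext m
    simp
  | succ n ih =>
    funext y
    rw [iteratedFDeriv_succ_eq_comp_left, iteratedFDeriv_succ_eq_comp_left]
    simp only [Function.comp_apply]
    congr 1
    rw [ih]
    have hd : DifferentiableAt ℝ (iteratedFDeriv ℝ n f) (y - x) :=
      (hf.differentiable_iteratedFDeriv (by exact_mod_cast lt_top_iff_ne_top.mpr (by simp))) (y - x)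
    have h2 : HasFDerivAt (fun y : E => y - x) (ContinuousLinearMap.id ℝ E) y := by
      simpa using (hasFDerivAt_id y).sub_const x
    have h3 : HasFDerivAt (fun y => iteratedFDeriv ℝ n f (y - x))
        ((fderiv ℝ (iteratedFDeriv ℝ n f) (y - x)).comp (ContinuousLinearMap.id ℝ E)) y :=
      hd.hasFDerivAt.comp y h2
    rw [h3.fderiv, ContinuousLinearMap.comp_id]

/-- uniform dilation bound for the STFT of dilated Schwartz functions. -/
theorem stft_dilation_uniform_bound (ℏ : ℝ) (hℏ : 0 < ℏ) (d : ℕ)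
    (φ g : SchwartzMap (Ed d) ℂ) (N : ℕ) :
    ∃ C : ℝ, 0 < C ∧ ∀ ε : ℝ, 0 < ε → ε < 1 → ∀ x ξ : Ed d,
      ‖STFT ℏ (fun y => g y) (fun y => φ (ε • y)) x ξ‖ ≤ C * ((1 + ‖ξ‖ ^ 2) ^ N)⁻¹ := by
  have hπℏ : (0:ℝ) < 2 * Real.pi * ℏ := by positivity
  set c : ℂ := (((2 * Real.pi * ℏ : ℝ) : ℂ)) ^ (-(d : ℂ) / 2) with hc
  set M : ℕ → ℝ := fun i => SchwartzMap.seminorm ℝ 0 i φ with hMdef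
  set J : ℕ → ℝ := fun j => ∫ z : Ed d, ‖iteratedFDeriv ℝ j (⇑g) z‖ with hJdef
  have hgint : ∀ j : ℕ, Integrable (fun z : Ed d => ‖iteratedFDeriv ℝ j (⇑g) z‖) := by
    intro j
    simpa using g.integrable_pow_mul_iteratedFDeriv (volume) 0 j
  have hMnn : ∀ i, 0 ≤ M i := fun i => apply_nonneg _ _
  have hJnn : ∀ j, 0 ≤ J j := fun j => integral_nonneg fun z => norm_nonneg _
  set D : ℕ → ℝ := fun m => ∑ i ∈ Finset.range (m+1), (m.choose i : ℝ) * M i * J (m - i)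
    with hDdef
  have hDnn : ∀ m, 0 ≤ D m := fun m => Finset.sum_nonneg fun i _ =>
    mul_nonneg (mul_nonneg (by positivity) (hMnn i)) (hJnn _)
  set T : ℝ := ∑ m ∈ Finset.range (2*N+1), D m with hTdef
  have hTnn : 0 ≤ T := Finset.sum_nonneg fun m _ => hDnn m
  have hD0T : D 0 ≤ T :=
    Finset.single_le_sum (fun m _ => hDnn m) (by simp : 0 ∈ Finset.range (2*N+1))
  refine ⟨‖c‖ * 2^N * (1 + (2*Real.pi*ℏ)^(2*N) * 2^(2*N)) * T + 1, ?_, ?_⟩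
  · have : (0:ℝ) ≤ ‖c‖ * 2^N * (1 + (2*Real.pi*ℏ)^(2*N) * 2^(2*N)) * T :=
      mul_nonneg (by positivity) hTnn
    linarith
  intro ε hε0 hε1 x ξ
  set w : Ed d := ((2*Real.pi*ℏ)⁻¹ : ℝ) • ξ with hw
  set h : Ed d → ℂ := fun y => φ (ε • y) * (starRingEnd ℂ) (g (y - x)) with hh
  -- smoothness
  have hφε : ContDiff ℝ (⊤:ℕ∞) (fun y : Ed d => φ (ε • y)) :=
    (φ.smooth ⊤).comp (contDiff_id.const_smul ε)
  have hgx : ContDiff ℝ (⊤:ℕ∞) (fun y : Ed d => (g (y - x) : ℂ)) :=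
    (g.smooth ⊤).comp (contDiff_id.sub contDiff_const)
  have hGc : ContDiff ℝ (⊤:ℕ∞) (fun y : Ed d => (starRingEnd ℂ) (g (y - x))) :=
    Complex.conjCLE.contDiff.comp hgx
  have hsmooth : ContDiff ℝ (⊤:ℕ∞) h := hφε.mul hGc
  -- dilation bound
  have hdil : ∀ (i : ℕ) (y : Ed d),
      ‖iteratedFDeriv ℝ i (fun y : Ed d => φ (ε • y)) y‖ ≤ M i := by
    intro i y
    have hcomp : (fun y : Ed d => φ (ε • y))
        = (⇑φ) ∘ (ε • ContinuousLinearMap.id ℝ (Ed d)) := by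
      funext y; simp
    rw [hcomp, ContinuousLinearMap.iteratedFDeriv_comp_right _ (φ.smooth ⊤) y
      (by exact_mod_cast le_top)]
    refine (ContinuousMultilinearMap.norm_compContinuousLinearMap_le _ _).trans ?_
    have h1 : ‖(ε • ContinuousLinearMap.id ℝ (Ed d))‖ ≤ 1 := by
      refine (ContinuousLinearMap.opNorm_smul_le _ _).trans ?_
      rw [Real.norm_eq_abs, abs_of_pos hε0]
      calc ε * ‖ContinuousLinearMap.id ℝ (Ed d)‖ ≤ 1 * 1 :=
        mul_le_mul hε1.le ContinuousLinearMap.norm_id_le (norm_nonneg _) zero_le_one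
      _ = 1 := by ring
    calc ‖iteratedFDeriv ℝ i (⇑φ) ((ε • ContinuousLinearMap.id ℝ (Ed d)) y)‖ *
          ∏ _j : Fin i, ‖ε • ContinuousLinearMap.id ℝ (Ed d)‖
        ≤ M i * 1 := by
          refine mul_le_mul ?_ ?_ (by positivity) (hMnn i)
          · simpa using φ.norm_iteratedFDeriv_le_seminorm ℝ i _
          · exact Finset.prod_le_one (fun _ _ => norm_nonneg _) (fun _ _ => h1)
      _ = M i := mul_one _
  -- conjugate & translate
  have hconjg : ∀ (j : ℕ) (y : Ed d),
      ‖iteratedFDeriv ℝ j (fun y : Ed d => (starRingEnd ℂ) (g (y - x))) y‖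
        = ‖iteratedFDeriv ℝ j (⇑g) (y - x)‖ := by
    intro j y
    have e1 : (fun y : Ed d => (starRingEnd ℂ) (g (y - x)))
        = (Complex.conjLIE : ℂ ≃ₗᵢ[ℝ] ℂ) ∘ (fun y : Ed d => g (y - x)) := by
      funext y; simp [Complex.conjLIE]; rfl
    rw [e1, LinearIsometryEquiv.norm_iteratedFDeriv_comp_left,
      my_iteratedFDeriv_comp_sub (g.smooth ⊤) x j]
  -- pointwise Leibniz bound
  have hpt : ∀ (m : ℕ) (y : Ed d), ‖iteratedFDeriv ℝ m h y‖ ≤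
      ∑ i ∈ Finset.range (m+1),
        (m.choose i : ℝ) * M i * ‖iteratedFDeriv ℝ (m-i) (⇑g) (y - x)‖ := by
    intro m y
    refine (norm_iteratedFDeriv_mul_le hφε hGc y (by exact_mod_cast le_top)).trans ?_
    refine Finset.sum_le_sum fun i _ => ?_
    rw [hconjg]
    gcongr
    exact hdil i y
  have hbound_int : ∀ m : ℕ, Integrable (fun y : Ed d =>
      ∑ i ∈ Finset.range (m+1),
        (m.choose i : ℝ) * M i * ‖iteratedFDeriv ℝ (m-i) (⇑g) (y - x)‖) :=
    fun m => integrable_finset_sum _ fun i _ => ((hgint (m-i)).comp_sub_right x).const_mul _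
  have hDm_int : ∀ m : ℕ, Integrable (fun y : Ed d => iteratedFDeriv ℝ m h y) := by
    intro m
    haveI : SecondCountableTopologyEither (Ed d)
        (ContinuousMultilinearMap ℝ (fun _ : Fin m => Ed d) ℂ) :=
      secondCountableTopologyEither_of_left _ _
    refine (hbound_int m).mono'
      ((hsmooth.continuous_iteratedFDeriv (by exact_mod_cast le_top)).aestronglyMeasurable) ?_
    exact Eventually.of_forall (hpt m)
  have hInt_le : ∀ m : ℕ, (∫ y : Ed d, ‖iteratedFDeriv ℝ m h y‖) ≤ D m := by
    intro m
    refine (integral_mono (hDm_int m).norm (hbound_int m) (hpt m)).trans ?_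
    rw [integral_finset_sum _ fun i _ => ((hgint (m-i)).comp_sub_right x).const_mul _]
    refine le_of_eq (Finset.sum_congr rfl fun i _ => ?_)
    rw [integral_const_mul,
      integral_sub_right_eq_self (fun z : Ed d => ‖iteratedFDeriv ℝ (m-i) (⇑g) z‖) x]
  -- Fourier decay
  have h'f : ∀ (k n : ℕ), (k:ℕ∞) ≤ (0:ℕ∞) → (n:ℕ∞) ≤ (⊤:ℕ∞) →
      Integrable (fun v : Ed d => ‖v‖^k * ‖iteratedFDeriv ℝ n h v‖) := by
    intro k n hk _
    have hk0 : k = 0 := by simpa using hk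
    subst hk0
    simpa using (hDm_int n).norm
  have hkey : ∀ n : ℕ, ‖w‖ ^ n * ‖𝓕 h w‖ ≤ 2^n * ∑ m ∈ Finset.range (n+1), D m := by
    intro n
    have key := Real.pow_mul_norm_iteratedFDeriv_fourier_le (K := 0) (N := ⊤)
      (f := h) hsmooth h'f (k := 0) (n := n) le_rfl le_top w
    rw [norm_iteratedFDeriv_zero] at key
    refine key.trans ?_
    rw [pow_zero, one_mul]
    have : (2 * (0:ℕ) + 2 : ℝ) ^ n = 2 ^ n := by norm_num
    rw [this]
    gcongr
    rw [Finset.range_one, Finset.singleton_product, Finset.sum_map]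
    refine Finset.sum_le_sum fun m _ => ?_
    simpa using hInt_le m
  -- STFT as Fourier integral
  have hSTFT : STFT ℏ (fun y => g y) (fun y => φ (ε • y)) x ξ = c * 𝓕 h w := by
    simp only [STFT]
    rw [Real.fourier_eq']
    congr 1
    refine integral_congr_ae (Eventually.of_forall fun y => ?_)
    have hexp : Complex.exp (((-2 * Real.pi * ⟪y, w⟫ : ℝ) : ℂ) * Complex.I)
        = Complex.exp (-(Complex.I / (ℏ : ℂ)) * ((⟪ξ, y⟫ : ℝ) : ℂ)) := by
      congr 1
      have hip : ⟪y, w⟫ = (2*Real.pi*ℏ)⁻¹ * ⟪ξ, y⟫ := by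
        rw [hw, real_inner_smul_right, real_inner_comm]
      rw [hip]
      have hℏc : (ℏ : ℂ) ≠ 0 := Complex.ofReal_ne_zero.mpr hℏ.ne'
      have hπc : ((Real.pi : ℝ) : ℂ) ≠ 0 := Complex.ofReal_ne_zero.mpr Real.pi_ne_zero
      push_cast
      field_simp
    simp only [hh, smul_eq_mul]
    rw [hexp]
    ring
  rw [hSTFT, norm_mul]
  have hpos : (0:ℝ) < (1 + ‖ξ‖^2)^N := by positivity
  rw [← div_eq_mul_inv, le_div_iff₀ hpos]
  -- bound (1+‖ξ‖²)^N
  have hξ : (1 + ‖ξ‖^2)^N ≤ 2^N * (1 + ‖ξ‖^(2*N)) := by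
    have h1 : (1 + ‖ξ‖^2)^N ≤ (2 * max 1 (‖ξ‖^2))^N := by
      apply pow_le_pow_left₀ (by positivity)
      have h2 := le_max_left 1 (‖ξ‖^2)
      have h3 := le_max_right 1 (‖ξ‖^2)
      linarith
    refine h1.trans ?_
    rw [mul_pow]
    have h4 : (max 1 (‖ξ‖^2))^N ≤ 1 + ‖ξ‖^(2*N) := by
      rcases le_total (‖ξ‖^2) 1 with hle | hle
      · rw [max_eq_left hle, one_pow]
        have : (0:ℝ) ≤ ‖ξ‖^(2*N) := by positivity
        linarith
      · rw [max_eq_right hle, ← pow_mul]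
        linarith
    have h5 : (0:ℝ) ≤ (2:ℝ)^N := by positivity
    exact mul_le_mul_of_nonneg_left h4 h5
  have hwnorm : ‖ξ‖ = (2*Real.pi*ℏ) * ‖w‖ := by
    rw [hw, norm_smul, Real.norm_eq_abs, abs_of_pos (inv_pos.mpr hπℏ)]
    field_simp
  have hF0 : ‖𝓕 h w‖ ≤ T := by
    have := hkey 0
    simp only [pow_zero, one_mul, zero_add, Finset.range_one, Finset.sum_singleton] at this
    exact this.trans hD0T
  have hFN : ‖ξ‖^(2*N) * ‖𝓕 h w‖ ≤ (2*Real.pi*ℏ)^(2*N) * (2^(2*N) * T) := by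
    have h6 : (0:ℝ) ≤ (2*Real.pi*ℏ)^(2*N) := by positivity
    have h7 := mul_le_mul_of_nonneg_left (hkey (2*N)) h6
    have h8 : ‖ξ‖^(2*N) * ‖𝓕 h w‖ = (2*Real.pi*ℏ)^(2*N) * (‖w‖^(2*N) * ‖𝓕 h w‖) := by
      rw [hwnorm]; ring
    rw [h8]
    exact h7
  calc ‖c‖ * ‖𝓕 h w‖ * (1 + ‖ξ‖^2)^N
      ≤ ‖c‖ * ‖𝓕 h w‖ * (2^N * (1 + ‖ξ‖^(2*N))) := by
        gcongr
    _ = ‖c‖ * 2^N * (‖𝓕 h w‖ + ‖ξ‖^(2*N) * ‖𝓕 h w‖) := by ring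
    _ ≤ ‖c‖ * 2^N * (T + (2*Real.pi*ℏ)^(2*N) * (2^(2*N) * T)) := by
        gcongr
    _ = ‖c‖ * 2^N * (1 + (2*Real.pi*ℏ)^(2*N) * 2^(2*N)) * T := by ring
    _ ≤ ‖c‖ * 2^N * (1 + (2*Real.pi*ℏ)^(2*N) * 2^(2*N)) * T + 1 := by linarith
end
end

section
/- Parseval-type formula for Fourier transforms of measures: if μ is a finite complex Borel measure on ℝ^d and f(x) = ∫_{ℝ^d} e^{i ξ·x} dμ(ξ), then f is Fresnel integrable and the Fresnel integral lim_{ε↓0} (2πiℏ)^{-d/2} ∫ e^{i|x|²/(2ℏ)} f(x)φ(εx) dx (for any φ ∈ S(ℝ^d) with φ(0)=1) equals ∫_{ℝ^d} e^{-iℏ|x|²/2} dμ(x). -/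
open MeasureTheory Complex Filter
open scoped RealInnerProductSpace ENNReal Topology

noncomputable section

section AuxFresnel
open FourierTransform Real

variable {d : ℕ}

lemma innerL_flip : (innerₗ (Ed d)).flip = innerₗ (Ed d) := by
  apply LinearMap.ext; intro x; apply LinearMap.ext; intro y
  simp [real_inner_comm]

lemma mult_formula (b : ℂ) (hb : 0 < b.re) (g : Ed d → ℂ) (hg : Integrable g) :
    ∫ ξ : Ed d, (𝓕 (fun v : Ed d => cexp (-b * ‖v‖^2)) ξ) * g ξ
      = ∫ x : Ed d, cexp (-b * ‖x‖^2) * 𝓕 g x := by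
  have hint : Integrable (fun v : Ed d => cexp (-b * ‖v‖^2)) := by
    simpa using GaussianFourier.integrable_cexp_neg_mul_sq_norm_add hb 0 (0 : Ed d)
  have := VectorFourier.integral_fourierIntegral_smul_eq_flip 
    (L := innerₗ (Ed d)) (μ := volume) (ν := volume)
    Real.continuous_fourierChar (by exact continuous_inner) hint hg
  rw [innerL_flip] at this
  simp only [smul_eq_mul] at this
  exact this

example : (𝓝[>] (0:ℝ)).IsCountablyGenerated := inferInstance

lemma re_div_nonpos {a : ℝ} (ha : a ≤ 0) {b : ℂ} (hb : 0 ≤ b.re) :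
    ((a : ℂ) / b).re ≤ 0 := by
  rw [Complex.div_re]
  simp only [Complex.ofReal_re, Complex.ofReal_im, zero_mul, zero_div, add_zero]
  exact div_nonpos_of_nonpos_of_nonneg (mul_nonpos_of_nonpos_of_nonneg ha hb)
    (Complex.normSq_nonneg b)

lemma norm_cexp_le_one {w : ℂ} (hw : w.re ≤ 0) : ‖cexp w‖ ≤ 1 := by
  rw [Complex.norm_exp]
  exact Real.exp_le_one_iff.2 hw

lemma fresnel_plancherel (ℏ : ℝ) (hℏ : 0 < ℏ) (g : Ed d → ℂ)
    (hg : Integrable g) (hg' : Integrable (𝓕 g)) :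
    (((2 * Real.pi : ℝ) : ℂ) * I * ℏ) ^ (-(d : ℂ) / 2)
        * ∫ k : Ed d, cexp (I * ((‖k‖ ^ 2 : ℝ) : ℂ) / (2 * (ℏ:ℂ))) * g k
      = ∫ x : Ed d, cexp (-(((2 * π ^ 2 * ℏ : ℝ)) : ℂ) * I * ((‖x‖ ^ 2 : ℝ) : ℂ)) * 𝓕 g x := by
  have hπ : (0:ℝ) < π := Real.pi_pos
  set l := 𝓝[>] (0:ℝ) with hl
  set c : ℝ → ℂ := fun δ => ((2 * π ^ 2 * ℏ : ℝ) : ℂ) * ((δ:ℂ) + I) with hc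
  have hcre : ∀ δ : ℝ, (c δ).re = 2 * π ^ 2 * ℏ * δ := by
    intro δ
    simp [hc, Complex.mul_re, ← Complex.ofReal_pow]
  have hcim : ∀ δ : ℝ, (c δ).im = 2 * π ^ 2 * ℏ := by
    intro δ
    simp [hc, Complex.mul_im, ← Complex.ofReal_pow]
  have hcne : ∀ δ : ℝ, c δ ≠ 0 := by
    intro δ h
    have := hcim δ
    rw [h] at this
    simp at this
    exact absurd this (ne_of_gt hℏ)
  have hc0 : c 0 = ((2 * π ^ 2 * ℏ : ℝ) : ℂ) * I := by simp [hc]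
  have hccont : Continuous c := by
    apply continuous_const.mul
    exact (Complex.continuous_ofReal).add continuous_const
  -- the key identity for positive δ
  have key : ∀ δ : ℝ, 0 < δ →
      ((π:ℂ)/c δ) ^ ((d:ℂ)/2) * ∫ k : Ed d, cexp (-(π:ℂ)^2 * ((‖k‖:ℂ))^2 / c δ) * g k
        = ∫ x : Ed d, cexp (-(c δ) * ((‖x‖:ℂ))^2) * 𝓕 g x := by
    intro δ hδ
    have hre : 0 < (c δ).re := by rw [hcre]; positivity
    have := mult_formula (c δ) hre g hg
    simp only [fourier_gaussian_innerProductSpace hre] at this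
    rw [finrank_euclideanSpace, Fintype.card_fin] at this
    rw [← this, ← integral_const_mul]
    congr 1 with k
    ring
  -- limit of the constant
  have hw_ne : (((2 * Real.pi : ℝ) : ℂ) * I * ℏ) ≠ 0 := by
    apply mul_ne_zero (mul_ne_zero _ Complex.I_ne_zero)
    · exact Complex.ofReal_ne_zero.2 (ne_of_gt hℏ)
    · exact Complex.ofReal_ne_zero.2 (by positivity)
  have hdiv : (π:ℂ) / c 0 = (((2 * Real.pi : ℝ) : ℂ) * I * ℏ)⁻¹ := by
    rw [← one_div, div_eq_div_iff (hcne 0) hw_ne, hc0]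
    push_cast
    ring
  have hdivim : ((π:ℂ) / c 0).im ≠ 0 := by
    rw [hdiv, Complex.inv_im]
    have him : (((2 * Real.pi : ℝ) : ℂ) * I * ℏ).im = 2 * π * ℏ := by
      simp [Complex.mul_im]
    rw [him]
    have : Complex.normSq (((2 * Real.pi : ℝ) : ℂ) * I * ℏ) > 0 :=
      Complex.normSq_pos.2 hw_ne
    intro h
    rw [div_eq_zero_iff] at h
    rcases h with h|h
    · simp at h
      rcases h with h|h <;> linarith
    · linarith
  have hconst : (((2 * Real.pi : ℝ) : ℂ) * I * ℏ) ^ (-(d : ℂ) / 2)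
      = ((π:ℂ)/c 0) ^ ((d:ℂ)/2) := by
    rw [hdiv, Complex.inv_cpow _ _ (by
      intro h
      rw [Complex.arg_eq_pi_iff] at h
      have him : (((2 * Real.pi : ℝ) : ℂ) * I * ℏ).im = 2 * π * ℏ := by
        simp [Complex.mul_im]
      rw [him] at h
      nlinarith [h.2]), ← Complex.cpow_neg, neg_div]
  have hA : Tendsto (fun δ => ((π:ℂ)/c δ) ^ ((d:ℂ)/2)) l
      (𝓝 (((π:ℂ)/c 0) ^ ((d:ℂ)/2))) := by
    apply Filter.Tendsto.cpow _ tendsto_const_nhds (Or.inr hdivim)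
    apply Filter.Tendsto.div tendsto_const_nhds _ (hcne 0)
    exact (hccont.tendsto 0).mono_left nhdsWithin_le_nhds
  have hB : Tendsto (fun δ => ∫ k : Ed d, cexp (-(π:ℂ)^2 * ((‖k‖:ℂ))^2 / c δ) * g k) l
      (𝓝 (∫ k : Ed d, cexp (I * ((‖k‖ ^ 2 : ℝ) : ℂ) / (2 * (ℏ:ℂ))) * g k)) := by
    apply tendsto_integral_filter_of_dominated_convergence (fun k => ‖g k‖)
    · filter_upwards with δ
      exact ((Complex.continuous_exp.comp (by fun_prop)).aestronglyMeasurable).mul hg.1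
    · filter_upwards [self_mem_nhdsWithin] with δ (hδ : 0 < δ)
      filter_upwards with k
      rw [norm_mul]
      have hz : (-(π:ℂ)^2 * ((‖k‖:ℂ))^2 / c δ) = ((-(π^2 * ‖k‖^2) : ℝ) : ℂ) / c δ := by
        push_cast; ring
      have : ‖cexp (-(π:ℂ)^2 * ((‖k‖:ℂ))^2 / c δ)‖ ≤ 1 := by
        apply norm_cexp_le_one
        rw [hz]
        exact re_div_nonpos (neg_nonpos.2 (by positivity)) (by rw [hcre]; positivity)
      nlinarith [norm_nonneg (g k)]
    · exact hg.norm
    · filter_upwards with k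
      apply Filter.Tendsto.mul_const
      apply (Complex.continuous_exp.tendsto _).comp
      have harg : Tendsto (fun δ => -(π:ℂ)^2 * ((‖k‖:ℂ))^2 / c δ) l
          (𝓝 (-(π:ℂ)^2 * ((‖k‖:ℂ))^2 / c 0)) := by
        apply Filter.Tendsto.div tendsto_const_nhds _ (hcne 0)
        exact (hccont.tendsto 0).mono_left nhdsWithin_le_nhds
      have heq : -(π:ℂ)^2 * ((‖k‖:ℂ))^2 / c 0 = I * ((‖k‖ ^ 2 : ℝ) : ℂ) / (2 * (ℏ:ℂ)) := by
        rw [div_eq_div_iff (hcne 0) (by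
          intro h
          rw [mul_eq_zero] at h
          rcases h with h|h
          · exact two_ne_zero h
          · exact Complex.ofReal_ne_zero.2 (ne_of_gt hℏ) h), hc0]
        push_cast
        ring_nf
        rw [Complex.I_sq]
        ring
      rw [heq] at harg
      exact harg
  have hC : Tendsto (fun δ => ∫ x : Ed d, cexp (-(c δ) * ((‖x‖:ℂ))^2) * 𝓕 g x) l
      (𝓝 (∫ x : Ed d, cexp (-(((2 * π ^ 2 * ℏ : ℝ)) : ℂ) * I * ((‖x‖ ^ 2 : ℝ) : ℂ)) * 𝓕 g x)) := by
    apply tendsto_integral_filter_of_dominated_convergence (fun x => ‖𝓕 g x‖)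
    · filter_upwards with δ
      exact ((Complex.continuous_exp.comp (by fun_prop)).aestronglyMeasurable).mul hg'.1
    · filter_upwards [self_mem_nhdsWithin] with δ (hδ : 0 < δ)
      filter_upwards with x
      rw [norm_mul]
      have : ‖cexp (-(c δ) * ((‖x‖:ℂ))^2)‖ ≤ 1 := by
        apply norm_cexp_le_one
        have : (-(c δ) * ((‖x‖:ℂ))^2).re = -((c δ).re * ‖x‖^2) := by
          rw [show ((‖x‖:ℂ))^2 = ((‖x‖^2 : ℝ) : ℂ) by push_cast; ring]
          simp [Complex.mul_re, ← Complex.ofReal_pow]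
        rw [this, hcre]
        have : 0 ≤ 2 * π ^ 2 * ℏ * δ * ‖x‖^2 := by positivity
        nlinarith
      nlinarith [norm_nonneg (𝓕 g x)]
    · exact hg'.norm
    · filter_upwards with x
      apply Filter.Tendsto.mul_const
      apply (Complex.continuous_exp.tendsto _).comp
      have harg : Tendsto (fun δ => -(c δ) * ((‖x‖:ℂ))^2) l
          (𝓝 (-(c 0) * ((‖x‖:ℂ))^2)) := by
        apply Filter.Tendsto.mul_const
        exact ((hccont.tendsto 0).mono_left nhdsWithin_le_nhds).neg
      have heq : -(c 0) * ((‖x‖:ℂ))^2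
          = -(((2 * π ^ 2 * ℏ : ℝ)) : ℂ) * I * ((‖x‖ ^ 2 : ℝ) : ℂ) := by
        rw [hc0]; push_cast; ring
      rw [heq] at harg
      exact harg
  have heq' : (fun δ => ((π:ℂ)/c δ) ^ ((d:ℂ)/2)
      * ∫ k : Ed d, cexp (-(π:ℂ)^2 * ((‖k‖:ℂ))^2 / c δ) * g k)
      =ᶠ[l] (fun δ => ∫ x : Ed d, cexp (-(c δ) * ((‖x‖:ℂ))^2) * 𝓕 g x) := by
    filter_upwards [self_mem_nhdsWithin] with δ (hδ : 0 < δ)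
    exact key δ hδ
  rw [hconst]
  exact tendsto_nhds_unique ((hA.mul hB).congr' heq') hC

lemma fourier_modulate_scale {ε : ℝ} (hε : 0 < ε) (ξ : Ed d) (φ : SchwartzMap (Ed d) ℂ)
    (x : Ed d) :
    𝓕 (fun v : Ed d => cexp (I * ((⟪ξ, v⟫ : ℝ) : ℂ)) * φ (ε • v)) x
      = ((ε ^ d : ℝ)⁻¹ : ℂ) * 𝓕 (⇑φ) (ε⁻¹ • (x - (2 * π)⁻¹ • ξ)) := by
  have hπ : (0:ℝ) < π := Real.pi_pos
  rw [fourier_eq, fourier_eq]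
  have hpt : ∀ v : Ed d, 𝐞 (-⟪v, x⟫) • (cexp (I * ((⟪ξ, v⟫ : ℝ) : ℂ)) * φ (ε • v))
      = (fun u => 𝐞 (-⟪u, ε⁻¹ • (x - (2 * π)⁻¹ • ξ)⟫) • φ u) (ε • v) := by
    intro v
    simp only
    rw [real_inner_smul_left, real_inner_smul_right, inner_sub_right, real_inner_smul_right]
    simp only [Circle.smul_def, Real.fourierChar_apply]
    rw [show ε * (ε⁻¹ * (⟪v, x⟫ - (2 * π)⁻¹ * ⟪v, ξ⟫))
        = ⟪v, x⟫ - (2 * π)⁻¹ * ⟪v, ξ⟫ by field_simp]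
    rw [smul_eq_mul, smul_eq_mul, ← mul_assoc, ← Complex.exp_add]
    congr 2
    rw [real_inner_comm ξ v]
    have h2π : ((2:ℂ) * π) ≠ 0 := by
      apply mul_ne_zero two_ne_zero (Complex.ofReal_ne_zero.2 (ne_of_gt hπ))
    push_cast
    field_simp
    ring
  rw [integral_congr_ae (Filter.Eventually.of_forall hpt)]
  have h2 := MeasureTheory.Measure.integral_comp_smul (μ := (volume : Measure (Ed d)))
    (fun u : Ed d => 𝐞 (-⟪u, ε⁻¹ • (x - (2 * π)⁻¹ • ξ)⟫) • φ u) ε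
  rw [h2]
  rw [finrank_euclideanSpace, Fintype.card_fin]
  rw [abs_of_pos (by positivity)]
  simp [Complex.real_smul]

lemma step2 (ℏ : ℝ) {ε : ℝ} (hε : 0 < ε) (ξ : Ed d) (φ : SchwartzMap (Ed d) ℂ) :
    ∫ x : Ed d, cexp (-((2 * π ^ 2 * ℏ : ℝ) : ℂ) * I * ((‖x‖ ^ 2 : ℝ) : ℂ))
        * 𝓕 (fun v : Ed d => cexp (I * ((⟪ξ, v⟫ : ℝ) : ℂ)) * φ (ε • v)) x
      = ∫ u : Ed d, cexp (-((2 * π ^ 2 * ℏ : ℝ) : ℂ) * I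
          * ((‖(2 * π)⁻¹ • ξ + ε • u‖ ^ 2 : ℝ) : ℂ)) * 𝓕 (⇑φ) u := by
  have hεd : (ε ^ d : ℝ) ≠ 0 := pow_ne_zero _ (ne_of_gt hε)
  simp only [fourier_modulate_scale hε ξ φ]
  set s : Ed d := (2 * π)⁻¹ • ξ with hs
  set F : Ed d → ℂ := fun x => cexp (-((2 * π ^ 2 * ℏ : ℝ) : ℂ) * I * ((‖x‖ ^ 2 : ℝ) : ℂ))
      * (((ε ^ d : ℝ)⁻¹ : ℂ) * 𝓕 (⇑φ) (ε⁻¹ • (x - s))) with hF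
  have h1 : ∫ x : Ed d, F x = ∫ x : Ed d, F (x + s) :=
    (MeasureTheory.integral_add_right_eq_self F s).symm
  have h2 := MeasureTheory.Measure.integral_comp_smul (μ := (volume : Measure (Ed d)))
    (fun x => F (x + s)) ε
  rw [finrank_euclideanSpace, Fintype.card_fin, abs_of_pos (by positivity)] at h2
  have h3 : ∫ x : Ed d, F (x + s) = (ε ^ d : ℝ) • ∫ u : Ed d, F (ε • u + s) := by
    rw [h2, smul_smul, mul_inv_cancel₀ hεd, one_smul]
  calc ∫ x : Ed d, F x = (ε ^ d : ℝ) • ∫ u : Ed d, F (ε • u + s) := by rw [h1, h3]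
    _ = ∫ u : Ed d, (ε ^ d : ℝ) • F (ε • u + s) := by rw [integral_smul]
    _ = _ := by
        congr 1 with u
        rw [hF]
        simp only
        rw [add_sub_cancel_right, smul_smul, inv_mul_cancel₀ (ne_of_gt hε), one_smul,
          add_comm (ε • u) s, Complex.real_smul]
        push_cast
        field_simp
        exact mul_div_cancel_left₀ _ (pow_ne_zero _ (Complex.ofReal_ne_zero.2 (ne_of_gt hε)))

lemma norm_cexp_real_mul_I (c t : ℝ) : ‖cexp (-((c : ℝ) : ℂ) * I * ((t : ℝ) : ℂ))‖ = 1 := by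
  rw [Complex.norm_exp]
  have : (-((c : ℝ) : ℂ) * I * ((t : ℝ) : ℂ)).re = 0 := by
    simp [Complex.mul_re, Complex.mul_im]
  rw [this, Real.exp_zero]

lemma fourier_integral_total (φ : SchwartzMap (Ed d) ℂ) (hφ : φ 0 = 1)
    (hint : Integrable (𝓕 ⇑φ)) : ∫ u : Ed d, 𝓕 (⇑φ) u = 1 := by
  have h := φ.continuous.fourierInv_fourier_eq φ.integrable hint
  have h0 := congrFun h 0
  rw [fourierInv_eq] at h0
  simpa [hφ] using h0

lemma step3 (ℏ : ℝ) (hℏ : 0 < ℏ) (φ : SchwartzMap (Ed d) ℂ) (hφ : φ 0 = 1)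
    (hint : Integrable (𝓕 ⇑φ)) (ξ : Ed d) :
    Tendsto (fun ε : ℝ => ∫ u : Ed d, cexp (-((2 * π ^ 2 * ℏ : ℝ) : ℂ) * I
        * ((‖(2 * π)⁻¹ • ξ + ε • u‖ ^ 2 : ℝ) : ℂ)) * 𝓕 (⇑φ) u)
      (𝓝[>] (0:ℝ)) (𝓝 (cexp (-I * (ℏ : ℂ) * ((‖ξ‖ ^ 2 : ℝ) : ℂ) / 2))) := by
  have hπ : (0:ℝ) < π := Real.pi_pos
  have hlim : Tendsto (fun ε : ℝ => ∫ u : Ed d, cexp (-((2 * π ^ 2 * ℏ : ℝ) : ℂ) * I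
      * ((‖(2 * π)⁻¹ • ξ + (0:ℝ) • u‖ ^ 2 : ℝ) : ℂ)) * 𝓕 (⇑φ) u)
      (𝓝[>] (0:ℝ)) (𝓝 (∫ u : Ed d, cexp (-((2 * π ^ 2 * ℏ : ℝ) : ℂ) * I
      * ((‖(2 * π)⁻¹ • ξ + (0:ℝ) • u‖ ^ 2 : ℝ) : ℂ)) * 𝓕 (⇑φ) u)) := tendsto_const_nhds
  have key : Tendsto (fun ε : ℝ => ∫ u : Ed d, cexp (-((2 * π ^ 2 * ℏ : ℝ) : ℂ) * I
      * ((‖(2 * π)⁻¹ • ξ + ε • u‖ ^ 2 : ℝ) : ℂ)) * 𝓕 (⇑φ) u)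
      (𝓝[>] (0:ℝ)) (𝓝 (∫ u : Ed d, cexp (-((2 * π ^ 2 * ℏ : ℝ) : ℂ) * I
      * ((‖(2 * π)⁻¹ • ξ‖ ^ 2 : ℝ) : ℂ)) * 𝓕 (⇑φ) u)) := by
    apply tendsto_integral_filter_of_dominated_convergence (fun u => ‖𝓕 (⇑φ) u‖)
    · filter_upwards with ε
      apply Continuous.aestronglyMeasurable (Continuous.mul _ _)
      · apply Complex.continuous_exp.comp
        fun_prop
      · exact VectorFourier.fourierIntegral_continuous Real.continuous_fourierChar
          (by exact continuous_inner) φ.integrable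
    · filter_upwards with ε
      filter_upwards with u
      rw [norm_mul, norm_cexp_real_mul_I]
      simp
    · exact hint.norm
    · filter_upwards with u
      apply Filter.Tendsto.mul_const
      apply (Complex.continuous_exp.tendsto _).comp
      have : Tendsto (fun ε : ℝ => -((2 * π ^ 2 * ℏ : ℝ) : ℂ) * I
          * ((‖(2 * π)⁻¹ • ξ + ε • u‖ ^ 2 : ℝ) : ℂ)) (𝓝 (0:ℝ))
          (𝓝 (-((2 * π ^ 2 * ℏ : ℝ) : ℂ) * I * ((‖(2 * π)⁻¹ • ξ + (0:ℝ) • u‖ ^ 2 : ℝ) : ℂ))) := by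
        apply Continuous.tendsto
        fun_prop
      simp only [zero_smul, add_zero] at this
      exact this.mono_left nhdsWithin_le_nhds
  have hval : ∫ u : Ed d, cexp (-((2 * π ^ 2 * ℏ : ℝ) : ℂ) * I
      * ((‖(2 * π)⁻¹ • ξ‖ ^ 2 : ℝ) : ℂ)) * 𝓕 (⇑φ) u
      = cexp (-I * (ℏ : ℂ) * ((‖ξ‖ ^ 2 : ℝ) : ℂ) / 2) := by
    rw [integral_const_mul, fourier_integral_total φ hφ hint, mul_one]
    congr 1
    have hn : (‖(2 * π)⁻¹ • ξ‖ ^ 2 : ℝ) = ‖ξ‖ ^ 2 / (2 * π) ^ 2 := by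
      rw [norm_smul, Real.norm_eq_abs, abs_of_pos (by positivity), mul_pow]
      field_simp
    rw [hn]
    have hπc : ((π : ℝ) : ℂ) ≠ 0 := Complex.ofReal_ne_zero.2 (ne_of_gt hπ)
    push_cast
    field_simp [hπc]
  rw [hval] at key
  exact key

lemma norm_cexp_I_mul_real (t : ℝ) : ‖cexp (I * ((t : ℝ) : ℂ))‖ = 1 := by
  rw [Complex.norm_exp]
  have : (I * ((t : ℝ) : ℂ)).re = 0 := by simp
  rw [this, Real.exp_zero]

lemma norm_cexp_fresnel (t ℏ : ℝ) : ‖cexp (I * ((t : ℝ) : ℂ) / (2 * (ℏ:ℂ)))‖ = 1 := by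
  rw [Complex.norm_exp]
  have : (I * ((t : ℝ) : ℂ) / (2 * (ℏ:ℂ))).re = 0 := by
    rw [show (2 * (ℏ:ℂ)) = ((2 * ℏ : ℝ) : ℂ) by push_cast; ring]
    simp [Complex.div_re]
  rw [this, Real.exp_zero]

lemma g_integrable {ε : ℝ} (hε : 0 < ε) (ξ : Ed d) (φ : SchwartzMap (Ed d) ℂ) :
    Integrable (fun v : Ed d => cexp (I * ((⟪ξ, v⟫ : ℝ) : ℂ)) * φ (ε • v)) := by
  apply Integrable.bdd_mul (c := 1) (φ.integrable.comp_smul (ne_of_gt hε))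
  · apply Continuous.aestronglyMeasurable
    apply Complex.continuous_exp.comp
    exact continuous_const.mul
      (Complex.continuous_ofReal.comp (continuous_const.inner continuous_id))
  · exact Filter.Eventually.of_forall (fun v => le_of_eq (norm_cexp_I_mul_real _))

lemma Fg_integrable {ε : ℝ} (hε : 0 < ε) (ξ : Ed d) (φ : SchwartzMap (Ed d) ℂ)
    (hint : Integrable (𝓕 ⇑φ)) :
    Integrable (𝓕 (fun v : Ed d => cexp (I * ((⟪ξ, v⟫ : ℝ) : ℂ)) * φ (ε • v))) := by
  have : Integrable (fun x : Ed d => 𝓕 (⇑φ) (ε⁻¹ • (x - (2 * π)⁻¹ • ξ))) := by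
    have h1 : Integrable (fun y : Ed d => 𝓕 (⇑φ) (ε⁻¹ • y)) :=
      hint.comp_smul (inv_ne_zero (ne_of_gt hε))
    exact h1.comp_sub_right _
  have := (this.const_mul (((ε ^ d : ℝ)⁻¹ : ℂ)))
  apply this.congr
  filter_upwards with x
  exact (fourier_modulate_scale hε ξ φ x).symm

lemma step4 (ℏ : ℝ) (ν : Measure (Ed d)) [IsFiniteMeasure ν] (ρ : Ed d → ℂ)
    (hρ : Integrable ρ ν) {ε : ℝ} (hε : 0 < ε) (φ : SchwartzMap (Ed d) ℂ) :
    ∫ x : Ed d, cexp (I * ((‖x‖ ^ 2 : ℝ) : ℂ) / (2 * (ℏ:ℂ)))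
        * (∫ ξ : Ed d, cexp (I * ((⟪ξ, x⟫ : ℝ) : ℂ)) * ρ ξ ∂ν) * φ (ε • x)
      = ∫ ξ : Ed d, ρ ξ * (∫ x : Ed d, cexp (I * ((‖x‖ ^ 2 : ℝ) : ℂ) / (2 * (ℏ:ℂ)))
          * (cexp (I * ((⟪ξ, x⟫ : ℝ) : ℂ)) * φ (ε • x))) ∂ν := by
  have c1 : Continuous fun p : Ed d × Ed d => cexp (I * ((‖p.1‖ ^ 2 : ℝ) : ℂ) / (2 * (ℏ:ℂ))) := by
    apply Complex.continuous_exp.comp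
    fun_prop
  have c2 : Continuous fun p : Ed d × Ed d => cexp (I * ((⟪p.2, p.1⟫ : ℝ) : ℂ)) := by
    apply Complex.continuous_exp.comp
    exact continuous_const.mul
      (Complex.continuous_ofReal.comp (continuous_inner.comp continuous_swap))
  have c3 : Continuous fun p : Ed d × Ed d => (φ (ε • p.1) : ℂ) := by
    exact φ.continuous.comp (continuous_fst.const_smul ε)
  have hInt : Integrable (fun p : Ed d × Ed d =>
      cexp (I * ((‖p.1‖ ^ 2 : ℝ) : ℂ) / (2 * (ℏ:ℂ)))
        * (cexp (I * ((⟪p.2, p.1⟫ : ℝ) : ℂ)) * ρ p.2) * φ (ε • p.1))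
      ((volume : Measure (Ed d)).prod ν) := by
    apply Integrable.mono'
      ((φ.integrable.comp_smul (ne_of_gt hε)).norm.mul_prod hρ.norm)
    · exact (c1.aestronglyMeasurable.mul
        (c2.aestronglyMeasurable.mul hρ.1.comp_snd)).mul c3.aestronglyMeasurable
    · filter_upwards with p
      rw [norm_mul, norm_mul, norm_mul, norm_cexp_fresnel, norm_cexp_I_mul_real,
        one_mul, one_mul, mul_comm]
  have h1 : ∀ x : Ed d, cexp (I * ((‖x‖ ^ 2 : ℝ) : ℂ) / (2 * (ℏ:ℂ)))
      * (∫ ξ : Ed d, cexp (I * ((⟪ξ, x⟫ : ℝ) : ℂ)) * ρ ξ ∂ν) * φ (ε • x)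
      = ∫ ξ : Ed d, cexp (I * ((‖x‖ ^ 2 : ℝ) : ℂ) / (2 * (ℏ:ℂ)))
          * (cexp (I * ((⟪ξ, x⟫ : ℝ) : ℂ)) * ρ ξ) * φ (ε • x) ∂ν := by
    intro x
    rw [← integral_const_mul, ← integral_mul_const]
  rw [integral_congr_ae (Filter.Eventually.of_forall h1),
    MeasureTheory.integral_integral_swap hInt]
  have h2 : ∀ ξ : Ed d, (∫ x : Ed d, cexp (I * ((‖x‖ ^ 2 : ℝ) : ℂ) / (2 * (ℏ:ℂ)))
      * (cexp (I * ((⟪ξ, x⟫ : ℝ) : ℂ)) * ρ ξ) * φ (ε • x))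
      = ρ ξ * ∫ x : Ed d, cexp (I * ((‖x‖ ^ 2 : ℝ) : ℂ) / (2 * (ℏ:ℂ)))
          * (cexp (I * ((⟪ξ, x⟫ : ℝ) : ℂ)) * φ (ε • x)) := by
    intro ξ
    rw [← integral_const_mul]
    exact integral_congr_ae (Filter.Eventually.of_forall (fun x => by ring))
  exact integral_congr_ae (μ := ν) (Filter.Eventually.of_forall h2)

theorem fresnel_parseval_measure_aux (ℏ : ℝ) (hℏ : 0 < ℏ) (d : ℕ)
    (ν : Measure (Ed d)) (hν : IsFiniteMeasure ν) (ρ : Ed d → ℂ)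
    (hρ : Integrable ρ ν) (f : Ed d → ℂ)
    (hf : f = fun x => ∫ ξ : Ed d, Complex.exp (Complex.I * ((inner ℝ ξ x : ℝ) : ℂ)) * ρ ξ ∂ν) :
    ∀ φ : SchwartzMap (Ed d) ℂ, φ 0 = 1 →
      Tendsto
        (fun ε : ℝ =>
          (((2 * Real.pi : ℝ) : ℂ) * Complex.I * (ℏ : ℂ)) ^ (-(d : ℂ) / 2) *
            ∫ x : Ed d,
              Complex.exp (Complex.I * ((‖x‖ ^ 2 : ℝ) : ℂ) / (2 * (ℏ : ℂ))) * f x * φ (ε • x))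
        (𝓝[>] (0 : ℝ))
        (𝓝 (∫ x : Ed d,
          Complex.exp (-Complex.I * (ℏ : ℂ) * ((‖x‖ ^ 2 : ℝ) : ℂ) / 2) * ρ x ∂ν)) := by
  intro φ hφ
  haveI := hν
  have hπ : (0:ℝ) < π := Real.pi_pos
  have hint : Integrable (𝓕 ⇑φ) := by
    have h : Integrable (⇑(SchwartzMap.fourierTransformCLM ℂ φ)) volume :=
      (SchwartzMap.fourierTransformCLM ℂ φ).integrable
    rwa [SchwartzMap.fourierTransformCLM_apply] at h
  have h𝓕cont : Continuous (𝓕 ⇑φ) :=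
    VectorFourier.fourierIntegral_continuous Real.continuous_fourierChar
      (by exact continuous_inner) φ.integrable
  set K : ℝ → Ed d → ℂ := fun ε ξ => ∫ u : Ed d, cexp (-((2 * π ^ 2 * ℏ : ℝ) : ℂ) * I
      * ((‖(2 * π)⁻¹ • ξ + ε • u‖ ^ 2 : ℝ) : ℂ)) * 𝓕 (⇑φ) u with hK
  have hmain : ∀ ε : ℝ, 0 < ε →
      (((2 * Real.pi : ℝ) : ℂ) * Complex.I * (ℏ : ℂ)) ^ (-(d : ℂ) / 2) *
          (∫ x : Ed d, cexp (I * ((‖x‖ ^ 2 : ℝ) : ℂ) / (2 * (ℏ:ℂ))) * f x * φ (ε • x))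
        = ∫ ξ : Ed d, ρ ξ * K ε ξ ∂ν := by
    intro ε hε
    simp only [hf]
    rw [step4 ℏ ν ρ hρ hε φ, ← MeasureTheory.integral_const_mul]
    apply integral_congr_ae (μ := ν)
    filter_upwards with ξ
    rw [mul_left_comm]
    congr 1
    have hp := fresnel_plancherel (d := d) ℏ hℏ
      (fun v => cexp (I * ((⟪ξ, v⟫ : ℝ) : ℂ)) * φ (ε • v))
      (g_integrable hε ξ φ) (Fg_integrable hε ξ φ hint)
    exact hp.trans (step2 ℏ hε ξ φ)
  have hT : (∫ x : Ed d, cexp (-Complex.I * (ℏ : ℂ) * ((‖x‖ ^ 2 : ℝ) : ℂ) / 2) * ρ x ∂ν)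
      = ∫ ξ : Ed d, ρ ξ * cexp (-I * (ℏ : ℂ) * ((‖ξ‖ ^ 2 : ℝ) : ℂ) / 2) ∂ν :=
    integral_congr_ae (μ := ν) (Filter.Eventually.of_forall (fun ξ => mul_comm _ _))
  rw [hT]
  have hKcont : ∀ ε : ℝ, Continuous (fun ξ => K ε ξ) := by
    intro ε
    apply MeasureTheory.continuous_of_dominated (bound := fun u => ‖𝓕 (⇑φ) u‖)
    · intro ξ
      exact ((Complex.continuous_exp.comp (by fun_prop)).mul h𝓕cont).aestronglyMeasurable
    · intro ξ
      filter_upwards with u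
      rw [norm_mul, norm_cexp_real_mul_I, one_mul]
    · exact hint.norm
    · filter_upwards with u
      apply Continuous.mul _ continuous_const
      apply Complex.continuous_exp.comp
      fun_prop
  have hDCT : Tendsto (fun ε : ℝ => ∫ ξ : Ed d, ρ ξ * K ε ξ ∂ν) (𝓝[>] (0:ℝ))
      (𝓝 (∫ ξ : Ed d, ρ ξ * cexp (-I * (ℏ : ℂ) * ((‖ξ‖ ^ 2 : ℝ) : ℂ) / 2) ∂ν)) := by
    apply tendsto_integral_filter_of_dominated_convergence
      (fun ξ => ‖ρ ξ‖ * ∫ u : Ed d, ‖𝓕 (⇑φ) u‖)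
    · filter_upwards with ε
      exact hρ.1.mul (hKcont ε).aestronglyMeasurable
    · filter_upwards with ε
      filter_upwards with ξ
      rw [norm_mul]
      apply mul_le_mul_of_nonneg_left _ (norm_nonneg _)
      apply norm_integral_le_of_norm_le hint.norm
      filter_upwards with u
      rw [norm_mul, norm_cexp_real_mul_I, one_mul]
    · exact hρ.norm.mul_const _
    · filter_upwards with ξ
      exact (step3 ℏ hℏ φ hφ hint ξ).const_mul (ρ ξ)
  apply hDCT.congr'
  filter_upwards [self_mem_nhdsWithin] with ε (hε : 0 < ε)
  exact (hmain ε hε).symm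

end AuxFresnel

/-- Parseval-type formula for the Fresnel integral of the Fourier
transform of a finite complex Borel measure (represented as `ρ dν` with `ν` a
finite positive Borel measure and `ρ` integrable). -/
theorem fresnel_parseval_measure (ℏ : ℝ) (hℏ : 0 < ℏ) (d : ℕ)
    (ν : Measure (Ed d)) (hν : IsFiniteMeasure ν) (ρ : Ed d → ℂ)
    (hρ : Integrable ρ ν) (f : Ed d → ℂ)
    (hf : f = fun x => ∫ ξ : Ed d, Complex.exp (Complex.I * ((inner ℝ ξ x : ℝ) : ℂ)) * ρ ξ ∂ν) :
    ∀ φ : SchwartzMap (Ed d) ℂ, φ 0 = 1 →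
      Tendsto
        (fun ε : ℝ =>
          (((2 * Real.pi : ℝ) : ℂ) * Complex.I * (ℏ : ℂ)) ^ (-(d : ℂ) / 2) *
            ∫ x : Ed d,
              Complex.exp (Complex.I * ((‖x‖ ^ 2 : ℝ) : ℂ) / (2 * (ℏ : ℂ))) * f x * φ (ε • x))
        (𝓝[>] (0 : ℝ))
        (𝓝 (∫ x : Ed d,
          Complex.exp (-Complex.I * (ℏ : ℂ) * ((‖x‖ ^ 2 : ℝ) : ℂ) / 2) * ρ x ∂ν)) := by
  exact fresnel_parseval_measure_aux ℏ hℏ d ν hν ρ hρ f hf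
end
end

section
/- The function f(x) = cos|x| on ℝ³ is not the Fourier transform of a finite complex Borel measure on ℝ³: there is no finite complex Borel measure μ on ℝ³ with cos|ξ| = ∫_{ℝ³} e^{-i ξ·x} dμ(x) for all ξ ∈ ℝ³. -/
open MeasureTheory Complex Filter
open scoped RealInnerProductSpace ENNReal Topology

noncomputable section

set_option maxHeartbeats 1000000

namespace CosFT

open Set Real

lemma integrableOn_invSqrt :
    IntegrableOn (fun u : ℝ => (Real.sqrt (1 - u ^ 2))⁻¹) (Ioo (-1 : ℝ) 1) := by
  have h := intervalIntegral.integrableOn_deriv_of_nonneg (g := Real.arcsin)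
      (g' := fun u : ℝ => (Real.sqrt (1 - u ^ 2))⁻¹) (a := -1) (b := 1)
      Real.continuous_arcsin.continuousOn
      (fun x hx => by
        simpa [one_div] using Real.hasDerivAt_arcsin (ne_of_gt hx.1) (ne_of_lt hx.2))
      (fun x hx => by positivity)
  exact h.mono_set Ioo_subset_Ioc_self

def D (c : ℝ) : ℂ :=
  ∫ u in Ioo (-1 : ℝ) 1,
    ((Real.sqrt (1 - u ^ 2) : ℝ) : ℂ)⁻¹ * Complex.exp (-(Complex.I * ((c * u : ℝ) : ℂ)))

lemma D_tendsto : Tendsto D atTop (𝓝 0) := by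
  set w : ℝ → ℂ := fun u => ((Real.sqrt (1 - u ^ 2) : ℝ) : ℂ)⁻¹ with hw
  set h : ℝ → ℂ := (Ioo (-1 : ℝ) 1).indicator w with hh
  have key : ∀ c : ℝ, D c = ∫ v : ℝ, Real.fourierChar (-(v * (c / (2 * π)))) • h v := by
    intro c
    have h1 : ∀ v : ℝ, Real.fourierChar (-(v * (c / (2 * π)))) • h v
        = (Ioo (-1 : ℝ) 1).indicator
            (fun u => w u * Complex.exp (-(Complex.I * ((c * u : ℝ) : ℂ)))) v := by
      intro v
      by_cases hv : v ∈ Ioo (-1 : ℝ) 1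
      · have harg : ((2 * π * (-(v * (c / (2 * π)))) : ℝ) : ℂ) * Complex.I
            = -(Complex.I * ((c * v : ℝ) : ℂ)) := by
          have hπc : (π : ℂ) ≠ 0 := by exact_mod_cast Real.pi_ne_zero
          push_cast
          field_simp
        rw [hh, indicator_of_mem hv, indicator_of_mem hv, Circle.smul_def,
          Real.fourierChar_apply, harg]
        exact mul_comm _ _
      · rw [hh, indicator_of_notMem hv, indicator_of_notMem hv, smul_zero]
    have h2 : ∫ v : ℝ, Real.fourierChar (-(v * (c / (2 * π)))) • h v
        = ∫ v in Ioo (-1 : ℝ) 1,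
            w v * Complex.exp (-(Complex.I * ((c * v : ℝ) : ℂ))) := by
      simp_rw [h1]
      exact integral_indicator measurableSet_Ioo
    rw [h2]; rfl
  have hmap : Tendsto (fun c : ℝ => c / (2 * π)) atTop (cocompact ℝ) := by
    refine (tendsto_id.atTop_div_const (by positivity)).mono_right ?_
    rw [cocompact_eq_atBot_atTop]
    exact le_sup_right
  have hrl := (Real.tendsto_integral_exp_smul_cocompact h).comp hmap
  have heq : D = fun c : ℝ => ∫ v : ℝ, Real.fourierChar (-(v * (c / (2 * π)))) • h v :=
    funext key
  rw [heq]
  exact hrl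

lemma cos_image1 : Real.cos '' Ioo 0 π = Ioo (-1 : ℝ) 1 := by
  apply Set.Subset.antisymm
  · rintro u ⟨θ, hθ, rfl⟩
    constructor
    · have := Real.strictAntiOn_cos ⟨hθ.1.le, hθ.2.le⟩ ⟨Real.pi_pos.le, le_rfl⟩ hθ.2
      simpa using this
    · have := Real.strictAntiOn_cos ⟨le_rfl, Real.pi_pos.le⟩ ⟨hθ.1.le, hθ.2.le⟩ hθ.1
      simpa using this
  · intro u hu
    refine ⟨Real.arccos u, ⟨Real.arccos_pos.2 hu.2, ?_⟩, Real.cos_arccos hu.1.le hu.2.le⟩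
    refine lt_of_le_of_ne (Real.arccos_le_pi u) fun h => ?_
    have := Real.arccos_eq_pi.1 h
    linarith [hu.1]

lemma cos_image2 : Real.cos '' Ioo π (2 * π) = Ioo (-1 : ℝ) 1 := by
  apply Set.Subset.antisymm
  · rintro u ⟨θ, hθ, rfl⟩
    have hmem : Real.cos (2 * π - θ) ∈ Real.cos '' Ioo 0 π :=
      ⟨2 * π - θ, ⟨by linarith [hθ.2], by linarith [hθ.1]⟩, rfl⟩
    rw [cos_image1] at hmem
    rwa [Real.cos_two_pi_sub] at hmem
  · intro u hu
    have h1 : Real.arccos u < π := by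
      refine lt_of_le_of_ne (Real.arccos_le_pi u) fun h => ?_
      have := Real.arccos_eq_pi.1 h; linarith [hu.1]
    have h2 : 0 < Real.arccos u := Real.arccos_pos.2 hu.2
    exact ⟨2 * π - Real.arccos u, ⟨by linarith, by linarith⟩,
      by rw [Real.cos_two_pi_sub]; exact Real.cos_arccos hu.1.le hu.2.le⟩

lemma inj_cos2 : InjOn Real.cos (Ioo π (2 * π)) := by
  intro a ha b hb hab
  have h2 : Real.cos (2 * π - a) = Real.cos (2 * π - b) := by
    rw [Real.cos_two_pi_sub, Real.cos_two_pi_sub, hab]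
  have := Real.injOn_cos ⟨by linarith [ha.2], by linarith [ha.1]⟩
    ⟨by linarith [hb.2], by linarith [hb.1]⟩ h2
  linarith

lemma key_factor (c : ℝ) {θ : ℝ} (hθ : Real.sin θ ≠ 0) :
    |(-Real.sin θ)| • (((Real.sqrt (1 - Real.cos θ ^ 2) : ℝ) : ℂ)⁻¹ *
      Complex.exp (-(Complex.I * ((c * Real.cos θ : ℝ) : ℂ))))
    = Complex.exp (-(Complex.I * ((c * Real.cos θ : ℝ) : ℂ))) := by
  have h1 : Real.sqrt (1 - Real.cos θ ^ 2) = |Real.sin θ| := by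
    rw [show (1 : ℝ) - Real.cos θ ^ 2 = Real.sin θ ^ 2 by
      rw [Real.sin_sq]]
    exact Real.sqrt_sq_eq_abs _
  rw [abs_neg, h1, Complex.real_smul]
  have hne : ((|Real.sin θ| : ℝ) : ℂ) ≠ 0 := by
    exact_mod_cast (abs_ne_zero.2 hθ)
  rw [← mul_assoc, mul_inv_cancel₀ hne, one_mul]

lemma branch1 (c : ℝ) :
    ∫ θ in Ioo (0 : ℝ) π, Complex.exp (-(Complex.I * ((c * Real.cos θ : ℝ) : ℂ))) = D c := by
  have h := integral_image_eq_integral_abs_deriv_smul (s := Ioo (0 : ℝ) π)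
    (f := Real.cos) (f' := fun θ => -Real.sin θ) measurableSet_Ioo
    (fun θ _ => (Real.hasDerivAt_cos θ).hasDerivWithinAt)
    (Real.injOn_cos.mono Ioo_subset_Icc_self)
    (fun u => ((Real.sqrt (1 - u ^ 2) : ℝ) : ℂ)⁻¹ *
      Complex.exp (-(Complex.I * ((c * u : ℝ) : ℂ))))
  rw [cos_image1] at h
  rw [D, h]
  apply setIntegral_congr_fun measurableSet_Ioo
  intro θ hθ
  exact (key_factor c (ne_of_gt (Real.sin_pos_of_pos_of_lt_pi hθ.1 hθ.2))).symm

lemma branch2 (c : ℝ) :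
    ∫ θ in Ioo π (2 * π), Complex.exp (-(Complex.I * ((c * Real.cos θ : ℝ) : ℂ))) = D c := by
  have h := integral_image_eq_integral_abs_deriv_smul (s := Ioo π (2 * π))
    (f := Real.cos) (f' := fun θ => -Real.sin θ) measurableSet_Ioo
    (fun θ _ => (Real.hasDerivAt_cos θ).hasDerivWithinAt)
    inj_cos2
    (fun u => ((Real.sqrt (1 - u ^ 2) : ℝ) : ℂ)⁻¹ *
      Complex.exp (-(Complex.I * ((c * u : ℝ) : ℂ))))
  rw [cos_image2] at h
  rw [D, h]
  apply setIntegral_congr_fun measurableSet_Ioo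
  intro θ hθ
  have hs : Real.sin θ ≠ 0 := by
    have h3 : 0 < Real.sin (θ - π) := Real.sin_pos_of_pos_of_lt_pi (by linarith [hθ.1]) (by linarith [hθ.2])
    rw [Real.sin_sub_pi] at h3
    exact fun h => by rw [h] at h3; simp at h3
  exact (key_factor c hs).symm

def C (c : ℝ) : ℂ :=
  ∫ θ in (0 : ℝ)..(2 * π), Complex.exp (-(Complex.I * ((c * Real.cos θ : ℝ) : ℂ)))

lemma C_eq (c : ℝ) : C c = 2 * D c := by
  have hcont : Continuous fun θ : ℝ => Complex.exp (-(Complex.I * ((c * Real.cos θ : ℝ) : ℂ))) := by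
    exact Complex.continuous_exp.comp
      (((continuous_const.mul (Complex.continuous_ofReal.comp
        (continuous_const.mul Real.continuous_cos)))).neg)
  have h1 : IntervalIntegrable _ volume (0 : ℝ) π := hcont.intervalIntegrable _ _
  have h2 : IntervalIntegrable _ volume π (2 * π) := hcont.intervalIntegrable _ _
  have hadd := intervalIntegral.integral_add_adjacent_intervals h1 h2
  rw [C, ← hadd, intervalIntegral.integral_of_le Real.pi_pos.le,
    intervalIntegral.integral_of_le (by linarith [Real.pi_pos] : π ≤ 2 * π),
    integral_Ioc_eq_integral_Ioo, integral_Ioc_eq_integral_Ioo, branch1, branch2]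
  ring

lemma shift (c α : ℝ) :
    ∫ θ in Ioo (0 : ℝ) (2 * π),
      Complex.exp (-(Complex.I * ((c * Real.cos (θ - α) : ℝ) : ℂ))) = C c := by
  have h0 : (0 : ℝ) ≤ 2 * π := by positivity
  rw [← integral_Ioc_eq_integral_Ioo, ← intervalIntegral.integral_of_le h0]
  rw [intervalIntegral.integral_comp_sub_right
    (fun θ => Complex.exp (-(Complex.I * ((c * Real.cos θ : ℝ) : ℂ)))) α]
  have hper : Function.Periodic
      (fun θ : ℝ => Complex.exp (-(Complex.I * ((c * Real.cos θ : ℝ) : ℂ)))) (2 * π) :=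
    fun θ => by simp [Real.cos_add_two_pi]
  have hh := hper.intervalIntegral_add_eq (0 - α) 0
  have hb : 0 - α + 2 * π = 2 * π - α := by ring
  rw [hb, zero_add] at hh
  exact hh

lemma C_tendsto : Tendsto C atTop (𝓝 0) := by
  have : C = fun c => 2 * D c := funext C_eq
  rw [this]
  simpa using Filter.Tendsto.const_mul (2 : ℂ) D_tendsto

def Jf (r a b : ℝ) : ℂ :=
  (2 * π)⁻¹ • ∫ θ in Ioo (0 : ℝ) (2 * π),
    Complex.exp (-(Complex.I * ((r * (Real.cos θ * a + Real.sin θ * b) : ℝ) : ℂ)))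

lemma Jf_decay (a b : ℝ) (hab : ¬(a = 0 ∧ b = 0)) :
    Tendsto (fun r : ℝ => Jf r a b) atTop (𝓝 0) := by
  set z : ℂ := (a : ℂ) + (b : ℂ) * Complex.I with hz
  have hre : z.re = a := by simp [hz]
  have him : z.im = b := by simp [hz]
  have hz0 : z ≠ 0 := by
    intro h0
    exact hab ⟨by rw [← hre, h0, Complex.zero_re], by rw [← him, h0, Complex.zero_im]⟩
  set s : ℝ := ‖z‖ with hs
  have hs0 : 0 < s := norm_pos_iff.mpr hz0
  set α : ℝ := Complex.arg z with hα
  have hca : Real.cos α = a / s := by rw [hα, Complex.cos_arg hz0, hre]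
  have hsa : Real.sin α = b / s := by rw [hα, Complex.sin_arg, him]
  have hphase : ∀ r θ : ℝ,
      r * (Real.cos θ * a + Real.sin θ * b) = r * s * Real.cos (θ - α) := by
    intro r θ
    rw [Real.cos_sub, hca, hsa]
    field_simp
  have hJ : ∀ r : ℝ, Jf r a b = (2 * π)⁻¹ • C (r * s) := by
    intro r
    rw [Jf, ← shift (r * s) α]
    congr 1
    apply setIntegral_congr_fun measurableSet_Ioo
    intro θ _
    simp only [hphase]
  have hfun : (fun r : ℝ => Jf r a b) = fun r => (2 * π)⁻¹ • C (r * s) := funext hJ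
  rw [hfun]
  have hmul : Tendsto (fun r : ℝ => r * s) atTop atTop :=
    Tendsto.atTop_mul_const hs0 tendsto_id
  simpa using (C_tendsto.comp hmul).const_smul ((2 * π)⁻¹ : ℝ)

lemma Jf_norm_le (r a b : ℝ) : ‖Jf r a b‖ ≤ 1 := by
  haveI : IsFiniteMeasure (volume.restrict (Ioo (0 : ℝ) (2 * π))) :=
    ⟨by rw [Measure.restrict_apply_univ]; exact measure_Ioo_lt_top⟩
  have h1 : ‖∫ θ in Ioo (0 : ℝ) (2 * π),
      Complex.exp (-(Complex.I * ((r * (Real.cos θ * a + Real.sin θ * b) : ℝ) : ℂ)))‖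
      ≤ 1 * (volume.restrict (Ioo (0 : ℝ) (2 * π)) Set.univ).toReal := by
    apply norm_integral_le_of_norm_le_const
    refine Filter.Eventually.of_forall fun θ => ?_
    rw [Complex.norm_exp]
    simp
  rw [Measure.restrict_apply_univ, Real.volume_Ioo, sub_zero,
    ENNReal.toReal_ofReal (by positivity), one_mul] at h1
  rw [Jf, norm_smul, Real.norm_eq_abs, abs_of_pos (by positivity : (0:ℝ) < (2*π)⁻¹)]
  calc (2 * π)⁻¹ * ‖_‖ ≤ (2 * π)⁻¹ * (2 * π) := by
        exact mul_le_mul_of_nonneg_left h1 (by positivity)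
    _ = 1 := by
        rw [inv_mul_cancel₀ (by positivity : (2 * π : ℝ) ≠ 0)]

lemma Jf_axis (r : ℝ) : Jf r 0 0 = 1 := by
  rw [Jf]
  simp only [mul_zero, zero_mul, add_zero, Complex.ofReal_zero, neg_zero, Complex.exp_zero]
  rw [setIntegral_const, measureReal_def, Real.volume_Ioo, sub_zero, ENNReal.toReal_ofReal (by positivity),
    smul_smul, inv_mul_cancel₀ (by positivity : (2 * π : ℝ) ≠ 0), one_smul]

lemma exp_cont (r : ℝ) : Continuous fun q : ℝ × (ℝ × ℝ) =>
    Complex.exp (-(Complex.I * ((r * (Real.cos q.1 * q.2.1 + Real.sin q.1 * q.2.2) : ℝ) : ℂ))) := by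
  apply Complex.continuous_exp.comp
  apply Continuous.neg
  apply continuous_const.mul
  apply Complex.continuous_ofReal.comp
  exact continuous_const.mul
    (((Real.continuous_cos.comp continuous_fst).mul (continuous_fst.comp continuous_snd)).add
      ((Real.continuous_sin.comp continuous_fst).mul (continuous_snd.comp continuous_snd)))

lemma Jf_meas (r : ℝ) : StronglyMeasurable fun p : ℝ × ℝ => Jf r p.1 p.2 := by
  have hjoint : StronglyMeasurable (Function.uncurry fun (p : ℝ × ℝ) (θ : ℝ) =>
      Complex.exp (-(Complex.I * ((r * (Real.cos θ * p.1 + Real.sin θ * p.2) : ℝ) : ℂ)))) :=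
    ((exp_cont r).comp continuous_swap).stronglyMeasurable
  exact (hjoint.integral_prod_right (ν := volume.restrict (Ioo (0 : ℝ) (2 * π)))).const_smul ((2 * π)⁻¹ : ℝ)

def xivec (r θ : ℝ) : Ed 3 :=
  (WithLp.equiv 2 (Fin 3 → ℝ)).symm ![r * Real.cos θ, r * Real.sin θ, 0]

lemma xivec_norm {r : ℝ} (hr : 0 ≤ r) (θ : ℝ) : ‖xivec r θ‖ = r := by
  rw [EuclideanSpace.norm_eq]
  have h0 : ∀ i : Fin 3, (xivec r θ) i = ![r * Real.cos θ, r * Real.sin θ, 0] i :=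
    fun _ => rfl
  simp only [h0, Fin.sum_univ_three]
  have h : ‖(![r * Real.cos θ, r * Real.sin θ, 0] : Fin 3 → ℝ) 0‖ ^ 2
      + ‖(![r * Real.cos θ, r * Real.sin θ, 0] : Fin 3 → ℝ) 1‖ ^ 2
      + ‖(![r * Real.cos θ, r * Real.sin θ, 0] : Fin 3 → ℝ) 2‖ ^ 2 = r ^ 2 := by
    simp only [Matrix.cons_val_zero, Matrix.cons_val_one, Matrix.head_cons,
      Matrix.cons_val_two, Matrix.tail_cons, Real.norm_eq_abs, _root_.sq_abs]
    have h1 := Real.sin_sq_add_cos_sq θ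
    nlinarith [h1]
  rw [h, Real.sqrt_sq hr]

lemma xivec_inner (r θ : ℝ) (x : Ed 3) :
    (inner ℝ (xivec r θ) x : ℝ) = r * (Real.cos θ * x 0 + Real.sin θ * x 1) := by
  have h0 : ∀ i : Fin 3, (xivec r θ) i = ![r * Real.cos θ, r * Real.sin θ, 0] i :=
    fun _ => rfl
  rw [PiLp.inner_apply]
  simp only [h0, Fin.sum_univ_three, RCLike.inner_apply, conj_trivial,
    Matrix.cons_val_zero, Matrix.cons_val_one, Matrix.head_cons,
    Matrix.cons_val_two, Matrix.tail_cons]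
  ring


end CosFT

open Set Real CosFT in
/-- `cos |ξ|` on ℝ³ is not the Fourier transform of a finite complex
Borel measure (any such measure being of the form `ρ dν` with `ρ` integrable). -/
theorem cos_norm_not_fourier_of_measure :
    ¬ ∃ (ν : Measure (Ed 3)) (ρ : Ed 3 → ℂ), Integrable ρ ν ∧
      ∀ ξ : Ed 3, ((Real.cos ‖ξ‖ : ℝ) : ℂ) =
        ∫ x : Ed 3, Complex.exp (-Complex.I * ((inner ℝ ξ x : ℝ) : ℂ)) * ρ x ∂ν := by
  rintro ⟨ν, ρ, hρ, hFT⟩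
  classical
  obtain ⟨ρm, hρm_meas, hρm_ae⟩ : ∃ g, StronglyMeasurable g ∧ ρ =ᵐ[ν] g :=
    ⟨hρ.1.mk ρ, hρ.1.stronglyMeasurable_mk, hρ.1.ae_eq_mk⟩
  set μ : Measure (Ed 3) := ν.withDensity (fun x => ‖ρm x‖₊) with hμdef
  haveI hfin : IsFiniteMeasure μ := by
    refine ⟨?_⟩
    rw [hμdef, withDensity_apply _ MeasurableSet.univ, Measure.restrict_univ]
    have he : (fun x => (‖ρm x‖₊ : ℝ≥0∞)) =ᵐ[ν] fun x => (‖ρ x‖₊ : ℝ≥0∞) :=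
      hρm_ae.symm.fun_comp fun z : ℂ => (‖z‖₊ : ℝ≥0∞)
    rw [lintegral_congr_ae he]
    exact hρ.2
  set σf : Ed 3 → ℂ := fun x => ρm x * ((‖ρm x‖ : ℝ) : ℂ)⁻¹ with hσdef
  have hσ_meas : Measurable σf :=
    hρm_meas.measurable.mul ((Complex.measurable_ofReal.comp hρm_meas.measurable.norm).inv)
  have hσ_bd : ∀ x, ‖σf x‖ ≤ 1 := by
    intro x
    by_cases h0 : ρm x = 0
    · simp [hσdef, h0]
    · rw [hσdef]
      simp only [norm_mul, norm_inv, Complex.norm_real, Real.norm_eq_abs,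
        _root_.abs_of_nonneg (norm_nonneg (ρm x))]
      rw [mul_inv_cancel₀ (norm_ne_zero_iff.2 h0)]
  have hK : ∀ ξ : Ed 3, ((Real.cos ‖ξ‖ : ℝ) : ℂ)
      = ∫ x, Complex.exp (-Complex.I * ((inner ℝ ξ x : ℝ) : ℂ)) * σf x ∂μ := by
    intro ξ
    rw [hFT ξ, hμdef, integral_withDensity_eq_integral_smul hρm_meas.measurable.nnnorm]
    apply integral_congr_ae
    filter_upwards [hρm_ae] with x hx
    rw [hx, hσdef]
    by_cases h0 : ρm x = 0
    · simp [h0]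
    · have hne : ((‖ρm x‖ : ℝ) : ℂ) ≠ 0 := by
        simpa using norm_ne_zero_iff.2 h0
      have key : ((‖ρm x‖ : ℝ) : ℂ) * (ρm x * ((‖ρm x‖ : ℝ) : ℂ)⁻¹) = ρm x := by
        rw [mul_comm (ρm x) _, ← mul_assoc, mul_inv_cancel₀ hne, one_mul]
      rw [NNReal.smul_def, coe_nnnorm, Complex.real_smul, mul_left_comm, key]
  have hc0 : Continuous fun x : Ed 3 => x 0 := (EuclideanSpace.proj (0 : Fin 3)).continuous
  have hc1 : Continuous fun x : Ed 3 => x 1 := (EuclideanSpace.proj (1 : Fin 3)).continuous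
  haveI : IsFiniteMeasure (volume.restrict (Ioo (0 : ℝ) (2 * π))) :=
    ⟨by rw [Measure.restrict_apply_univ]; exact measure_Ioo_lt_top⟩
  have h2π : (2 * π : ℝ) ≠ 0 := by positivity
  have hident : ∀ r : ℝ, 0 ≤ r →
      ((Real.cos r : ℝ) : ℂ) = ∫ x, Jf r (x 0) (x 1) * σf x ∂μ := by
    intro r hr
    have hstep : ∀ θ ∈ Ioo (0 : ℝ) (2 * π), ((Real.cos r : ℝ) : ℂ)
        = ∫ x, Complex.exp
            (-(Complex.I * ((r * (Real.cos θ * x 0 + Real.sin θ * x 1) : ℝ) : ℂ))) * σf x ∂μ := by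
      intro θ _
      have h := hK (xivec r θ)
      rw [xivec_norm hr θ] at h
      simp only [xivec_inner, neg_mul] at h
      exact h
    have hcont2 : Continuous fun q : ℝ × Ed 3 =>
        Complex.exp (-(Complex.I * ((r * (Real.cos q.1 * q.2 0 + Real.sin q.1 * q.2 1) : ℝ) : ℂ))) := by
      have := (exp_cont r).comp (Continuous.prodMk (continuous_fst : Continuous fun q : ℝ × Ed 3 => q.1)
        (Continuous.prodMk (hc0.comp continuous_snd) (hc1.comp continuous_snd)))
      exact this
    have hint : Integrable (Function.uncurry fun (θ : ℝ) (x : Ed 3) =>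
        Complex.exp (-(Complex.I * ((r * (Real.cos θ * x 0 + Real.sin θ * x 1) : ℝ) : ℂ))) * σf x)
        ((volume.restrict (Ioo (0 : ℝ) (2 * π))).prod μ) := by
      have haesm : AEStronglyMeasurable (Function.uncurry fun (θ : ℝ) (x : Ed 3) =>
          Complex.exp (-(Complex.I * ((r * (Real.cos θ * x 0 + Real.sin θ * x 1) : ℝ) : ℂ))) * σf x)
          ((volume.restrict (Ioo (0 : ℝ) (2 * π))).prod μ) :=
        hcont2.aestronglyMeasurable.mul
          ((hσ_meas.comp measurable_snd).aestronglyMeasurable)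
      refine Integrable.mono' (integrable_const (1 : ℝ)) haesm ?_
      refine Filter.Eventually.of_forall fun q => ?_
      rw [Function.uncurry]
      rw [norm_mul]
      have h1 : ‖Complex.exp (-(Complex.I *
          ((r * (Real.cos q.1 * q.2 0 + Real.sin q.1 * q.2 1) : ℝ) : ℂ)))‖ = 1 := by
        rw [Complex.norm_exp]
        simp
      rw [h1, one_mul]
      exact hσ_bd q.2
    have hswap := integral_integral_swap hint
    have e1 : ∫ θ in Ioo (0 : ℝ) (2 * π), ((Real.cos r : ℝ) : ℂ)
        = (2 * π : ℝ) • ((Real.cos r : ℝ) : ℂ) := by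
      rw [setIntegral_const, measureReal_def, Real.volume_Ioo, sub_zero, ENNReal.toReal_ofReal (by positivity)]
    have e2 : ∫ θ in Ioo (0 : ℝ) (2 * π), ((Real.cos r : ℝ) : ℂ)
        = ∫ θ in Ioo (0 : ℝ) (2 * π), (∫ x, Complex.exp
            (-(Complex.I * ((r * (Real.cos θ * x 0 + Real.sin θ * x 1) : ℝ) : ℂ))) * σf x ∂μ) :=
      setIntegral_congr_fun measurableSet_Ioo hstep
    have e4 : ∀ x : Ed 3, (∫ θ in Ioo (0 : ℝ) (2 * π), Complex.exp
            (-(Complex.I * ((r * (Real.cos θ * x 0 + Real.sin θ * x 1) : ℝ) : ℂ))) * σf x)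
        = (∫ θ in Ioo (0 : ℝ) (2 * π), Complex.exp
            (-(Complex.I * ((r * (Real.cos θ * x 0 + Real.sin θ * x 1) : ℝ) : ℂ)))) * σf x :=
      fun x => integral_mul_const _ _
    calc ((Real.cos r : ℝ) : ℂ)
        = (2 * π : ℝ)⁻¹ • ((2 * π : ℝ) • ((Real.cos r : ℝ) : ℂ)) := by
          rw [smul_smul, inv_mul_cancel₀ h2π, one_smul]
      _ = (2 * π : ℝ)⁻¹ • ∫ θ in Ioo (0 : ℝ) (2 * π), ((Real.cos r : ℝ) : ℂ) := by rw [e1]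
      _ = (2 * π : ℝ)⁻¹ • ∫ x, (∫ θ in Ioo (0 : ℝ) (2 * π), Complex.exp
            (-(Complex.I * ((r * (Real.cos θ * x 0 + Real.sin θ * x 1) : ℝ) : ℂ))) * σf x) ∂μ := by
          rw [e2, hswap]
      _ = ∫ x, Jf r (x 0) (x 1) * σf x ∂μ := by
          rw [← integral_smul]
          apply integral_congr_ae
          refine Filter.Eventually.of_forall fun x => ?_
          beta_reduce
          rw [e4 x, ← smul_mul_assoc]
          rfl
  have hAESM : ∀ r : ℝ, AEStronglyMeasurable (fun x => Jf r (x 0) (x 1) * σf x) μ := by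
    intro r
    have hpair : Measurable fun x : Ed 3 => (x 0, x 1) :=
      (hc0.measurable).prodMk (hc1.measurable)
    exact (((Jf_meas r).comp_measurable hpair).mul hσ_meas.stronglyMeasurable).aestronglyMeasurable
  set g : Ed 3 → ℂ := fun x => (if x 0 = 0 ∧ x 1 = 0 then (1 : ℂ) else 0) * σf x with hgdef
  have hdct : ∀ u : ℕ → ℝ, Tendsto u atTop atTop →
      Tendsto (fun n => ∫ x, Jf (u n) (x 0) (x 1) * σf x ∂μ) atTop (𝓝 (∫ x, g x ∂μ)) := by
    intro u hu
    apply tendsto_integral_of_dominated_convergence (fun _ => (1 : ℝ))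
    · exact fun n => hAESM (u n)
    · exact integrable_const _
    · intro n
      refine Filter.Eventually.of_forall fun x => ?_
      rw [norm_mul]
      calc ‖Jf (u n) (x 0) (x 1)‖ * ‖σf x‖ ≤ 1 * 1 :=
            mul_le_mul (Jf_norm_le _ _ _) (hσ_bd x) (norm_nonneg _) zero_le_one
        _ = 1 := by norm_num
    · refine Filter.Eventually.of_forall fun x => ?_
      by_cases hx : x 0 = 0 ∧ x 1 = 0
      · have hJ1 : ∀ n, Jf (u n) (x 0) (x 1) = 1 := fun n => by
          rw [hx.1, hx.2]; exact Jf_axis _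
        simp only [hJ1, hgdef, if_pos hx, one_mul]
        exact tendsto_const_nhds
      · have hdec := (Jf_decay (x 0) (x 1) hx).comp hu
        have h2 := hdec.mul_const (σf x)
        rw [zero_mul] at h2
        simpa only [hgdef, if_neg hx, zero_mul, Function.comp_apply] using h2
  have hL1 : (1 : ℂ) = ∫ x, g x ∂μ := by
    have hu : Tendsto (fun n : ℕ => (n : ℝ) * (2 * π)) atTop atTop :=
      Tendsto.atTop_mul_const (by positivity) tendsto_natCast_atTop_atTop
    have hlim := hdct _ hu
    have heq : (fun n : ℕ => ∫ x, Jf ((n : ℝ) * (2 * π)) (x 0) (x 1) * σf x ∂μ)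
        = fun _ : ℕ => (1 : ℂ) := by
      funext n
      rw [← hident _ (by positivity), Real.cos_nat_mul_two_pi]
      norm_num
    rw [heq] at hlim
    exact tendsto_nhds_unique tendsto_const_nhds hlim
  have hL2 : (-1 : ℂ) = ∫ x, g x ∂μ := by
    have hu : Tendsto (fun n : ℕ => (n : ℝ) * (2 * π) + π) atTop atTop :=
      tendsto_atTop_add_const_right _ π
        (Tendsto.atTop_mul_const (by positivity) tendsto_natCast_atTop_atTop)
    have hlim := hdct _ hu
    have heq : (fun n : ℕ => ∫ x, Jf ((n : ℝ) * (2 * π) + π) (x 0) (x 1) * σf x ∂μ)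
        = fun _ : ℕ => (-1 : ℂ) := by
      funext n
      rw [← hident _ (by positivity), Real.cos_nat_mul_two_pi_add_pi]
      norm_num
    rw [heq] at hlim
    exact tendsto_nhds_unique tendsto_const_nhds hlim
  rw [← hL1] at hL2
  norm_num at hL2
end
end

section
/- Lower bound for the Fresnel functional norm via Gaussians: for f_ε(x) = e^{-(ε+i)|x|²/(2ℏ)} on ℝⁿ with ε > 0, the Fresnel integral of e^{i|x|²/(2ℏ)} f_ε equals (iε)^{-n/2}, and with Gaussian window g_n as above, ‖f_ε‖_{M^{∞,1}_{(g_n)}} = ∏_{j=1}^{n} ((q_j+ε)² + 1)^{1/4} ( (1 + ε(q_j+ε)) / (ε(q_j² + 2q_jε + 1 + ε²)) )^{1/2}. -/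
open MeasureTheory Complex Filter
open scoped RealInnerProductSpace ENNReal Topology

noncomputable section

-- Part 1: the Fresnel integral limit
lemma part1 (ℏ : ℝ) (hℏ : 0 < ℏ) (n : ℕ) (ε : ℝ) (hε : 0 < ε)
    (f : Ed n → ℂ)
    (hf : f = fun x => Complex.exp (-((ε : ℂ) + Complex.I) * ((‖x‖ ^ 2 : ℝ) : ℂ) /
      (2 * (ℏ : ℂ))))
    (φ : SchwartzMap (Ed n) ℂ) (hφ : φ 0 = 1) :
      Tendsto
        (fun ε' : ℝ =>
          (((2 * Real.pi : ℝ) : ℂ) * Complex.I * (ℏ : ℂ)) ^ (-(n : ℂ) / 2) *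
            ∫ x : Ed n,
              Complex.exp (Complex.I * ((‖x‖ ^ 2 : ℝ) : ℂ) / (2 * (ℏ : ℂ))) *
                f x * φ (ε' • x))
        (𝓝[>] (0 : ℝ)) (𝓝 ((Complex.I * (ε : ℂ)) ^ (-(n : ℂ) / 2))) := by
  have hℏ' : (ℏ : ℂ) ≠ 0 := Complex.ofReal_ne_zero.2 hℏ.ne'
  set b : ℂ := (ε : ℂ) / (2 * ℏ) with hb
  have hbre : 0 < b.re := by
    rw [hb]
    rw [Complex.div_re]
    simp [Complex.normSq_apply]
    positivity
  -- rewrite integrand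
  have key : ∀ x : Ed n, Complex.exp (Complex.I * ((‖x‖ ^ 2 : ℝ) : ℂ) / (2 * (ℏ : ℂ))) * f x
      = Complex.exp (-b * ((‖x‖ ^ 2 : ℝ) : ℂ)) := by
    intro x
    rw [hf, ← Complex.exp_add]
    congr 1
    simp only [hb]
    field_simp
    ring
  simp only [key]
  -- the limit of the integral
  have hlim : Tendsto (fun ε' : ℝ => ∫ x : Ed n,
      Complex.exp (-b * ((‖x‖ ^ 2 : ℝ) : ℂ)) * φ (ε' • x)) (𝓝[>] (0 : ℝ))
      (𝓝 (∫ x : Ed n, Complex.exp (-b * ((‖x‖ ^ 2 : ℝ) : ℂ)))) := by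
    have h0 : (∫ x : Ed n, Complex.exp (-b * ((‖x‖ ^ 2 : ℝ) : ℂ)))
        = ∫ x : Ed n, Complex.exp (-b * ((‖x‖ ^ 2 : ℝ) : ℂ)) * φ ((0:Ed n)) := by
      simp [hφ]
    rw [h0]
    set M : ℝ := SchwartzMap.seminorm ℝ 0 0 φ with hM
    apply tendsto_integral_filter_of_dominated_convergence
      (fun x => M * Real.exp (-b.re * ‖x‖ ^ 2))
    · filter_upwards with ε'
      apply Continuous.aestronglyMeasurable
      exact (Complex.continuous_exp.comp (by fun_prop)).mul
        (φ.continuous.comp (by fun_prop))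
    · filter_upwards with ε'
      filter_upwards with x
      rw [norm_mul]
      have h1 : ‖Complex.exp (-b * ((‖x‖ ^ 2 : ℝ) : ℂ))‖ = Real.exp (-b.re * ‖x‖ ^ 2) := by
        rw [Complex.norm_exp]
        congr 1
        simp [Complex.mul_re, ← Complex.ofReal_pow]
      rw [h1, mul_comm]
      gcongr
      exact SchwartzMap.norm_le_seminorm ℝ φ _
    · have : Integrable (fun x : Ed n => Real.exp (-b.re * ‖x‖ ^ 2)) := by
        have := (GaussianFourier.integrable_cexp_neg_mul_sq_norm_add (V := Ed n)
          hbre 0 0).norm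
        apply this.congr
        filter_upwards with x
        rw [Complex.norm_exp]
        congr 1
        simp [Complex.mul_re, ← Complex.ofReal_pow]
      exact this.const_mul M
    · filter_upwards with x
      apply Tendsto.const_mul
      have hx0 : Tendsto (fun ε' : ℝ => ε' • x) (𝓝[>] (0:ℝ)) (𝓝 0) := by
        have : Tendsto (fun ε' : ℝ => ε' • x) (𝓝 (0:ℝ)) (𝓝 ((0:ℝ) • x)) := by
          exact (continuous_id.smul continuous_const).tendsto 0
        rw [zero_smul] at this
        exact this.mono_left nhdsWithin_le_nhds
      exact (φ.continuous.tendsto 0).comp hx0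
  -- value of the Gaussian integral
  have hval : (∫ x : Ed n, Complex.exp (-b * ((‖x‖ ^ 2 : ℝ) : ℂ)))
      = ((Real.pi : ℂ) / b) ^ ((n : ℂ) / 2) := by
    have := GaussianFourier.integral_cexp_neg_mul_sq_norm (V := Ed n) hbre
    simp only [finrank_euclideanSpace_fin] at this
    rw [← this]
    congr 1 with x
    push_cast
    ring_nf
  rw [hval] at hlim
  have := hlim.const_mul ((((2 * Real.pi : ℝ) : ℂ) * Complex.I * (ℏ : ℂ)) ^ (-(n : ℂ) / 2))
  convert this using 2
  -- final cpow identity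
  have hu : (((2 * Real.pi : ℝ) : ℂ) * Complex.I * (ℏ : ℂ))
      = ((2 * Real.pi * ℏ : ℝ) : ℂ) * Complex.I := by push_cast; ring
  have hr : (0:ℝ) < 2 * Real.pi * ℏ := by positivity
  have hr2 : (0:ℝ) < 2 * Real.pi * ℏ / ε := by positivity
  have hw : (Real.pi : ℂ) / b = ((2 * Real.pi * ℏ / ε : ℝ) : ℂ) := by
    rw [hb]; push_cast
    field_simp
  rw [hu, hw]
  have hne1 : ((2 * Real.pi * ℏ : ℝ) : ℂ) * Complex.I ≠ 0 :=
    mul_ne_zero (Complex.ofReal_ne_zero.2 hr.ne') Complex.I_ne_zero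
  have hne2 : ((2 * Real.pi * ℏ / ε : ℝ) : ℂ) ≠ 0 := Complex.ofReal_ne_zero.2 hr2.ne'
  have hne3 : Complex.I * (ε : ℂ) ≠ 0 :=
    mul_ne_zero Complex.I_ne_zero (Complex.ofReal_ne_zero.2 hε.ne')
  rw [Complex.cpow_def_of_ne_zero hne1, Complex.cpow_def_of_ne_zero hne2,
    Complex.cpow_def_of_ne_zero hne3, ← Complex.exp_add]
  congr 1
  have l1 : Complex.log (((2 * Real.pi * ℏ : ℝ) : ℂ) * Complex.I)
      = (Real.log (2 * Real.pi * ℏ) : ℂ) + (Real.pi : ℂ) / 2 * Complex.I := by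
    rw [Complex.log_ofReal_mul hr Complex.I_ne_zero, Complex.log_I]
  have l2 : Complex.log ((2 * Real.pi * ℏ / ε : ℝ) : ℂ)
      = ((Real.log (2 * Real.pi * ℏ) - Real.log ε : ℝ) : ℂ) := by
    rw [← Complex.ofReal_log hr2.le, Real.log_div hr.ne' hε.ne']
  have l3 : Complex.log (Complex.I * (ε : ℂ))
      = (Real.log ε : ℂ) + (Real.pi : ℂ) / 2 * Complex.I := by
    rw [mul_comm, Complex.log_ofReal_mul hε Complex.I_ne_zero, Complex.log_I]
  rw [l1, l2, l3]
  push_cast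
  ring

section Part2
variable (ℏ : ℝ) (hℏ : 0 < ℏ) {n : ℕ} (q : Fin n → ℝ) (ε : ℝ) (hε : 0 < ε)

/-- complex quadratic coefficient -/
def bC (ℏ ε : ℝ) {n : ℕ} (q : Fin n → ℝ) (j : Fin n) : ℂ :=
  (((2*ℏ)⁻¹:ℝ):ℂ) * ((q j:ℂ)+(ε:ℂ)+Complex.I)

def cC (ℏ : ℝ) {n : ℕ} (q : Fin n → ℝ) (x ξ : Ed n) (j : Fin n) : ℂ :=
  ((ℏ⁻¹:ℝ):ℂ) * ((q j:ℂ)*((x j:ℝ):ℂ) - Complex.I*((ξ j:ℝ):ℂ))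

def dC (ℏ : ℝ) {n : ℕ} (q : Fin n → ℝ) (x : Ed n) (j : Fin n) : ℂ :=
  (((2*ℏ)⁻¹:ℝ):ℂ) * (-(q j:ℂ)*((x j:ℝ):ℂ)^2)

include hℏ in
lemma hC_real (d : ℕ) : (((2 * Real.pi * ℏ : ℝ) : ℂ)) ^ (-(d : ℂ) / 2)
    = (((2 * Real.pi * ℏ) ^ (-(d : ℝ) / 2) : ℝ) : ℂ) := by
  have hr : (0:ℝ) ≤ 2 * Real.pi * ℏ := by positivity
  rw [Complex.ofReal_cpow hr]
  norm_num

include hℏ in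
lemma gwin_conj (z : Ed n) : (starRingEnd ℂ) (gwin ℏ q z) = gwin ℏ q z := by
  unfold gwin
  rw [hC_real ℏ hℏ, map_mul]
  rw [← Complex.exp_conj]
  simp [Complex.conj_ofReal, map_div₀, map_ofNat]

include hℏ hε in
lemma stft_eq (hq : ∀ j, 0 < q j) (x ξ : Ed n) :
    STFT ℏ (gwin ℏ q) (fun y => Complex.exp (-((ε:ℂ) + Complex.I) * ((‖y‖^2:ℝ):ℂ) / (2*(ℏ:ℂ)))) x ξ
    = ((((2*Real.pi*ℏ) ^ (-(n:ℝ)/2) : ℝ) : ℂ)) * (((((2*Real.pi*ℏ) ^ (-(n:ℝ)/2) : ℝ)) : ℂ) *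
        ∏ j, (((Real.pi:ℂ) / bC ℏ ε q j)^((1:ℂ)/2) *
          Complex.exp (dC ℏ q x j - (cC ℏ q x ξ j)^2 / (4 * (-(bC ℏ ε q j)))))) := by
  have hℏ' : (ℏ : ℂ) ≠ 0 := Complex.ofReal_ne_zero.2 hℏ.ne'
  set C : ℂ := ((((2*Real.pi*ℏ) ^ (-(n:ℝ)/2) : ℝ) : ℂ)) with hC
  have hbre : ∀ j : Fin n, (-(bC ℏ ε q j)).re < 0 := by
    intro j
    unfold bC
    simp only [neg_re, Complex.re_ofReal_mul, neg_lt_zero, Complex.add_re, Complex.ofReal_re,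
      Complex.I_re, add_zero]
    have h1 : (0:ℝ) < (2*ℏ)⁻¹ := by positivity
    have := hq j
    nlinarith
  -- step 1: integrand identity
  have hint : ∀ y : Ed n,
      Complex.exp (-(Complex.I / (ℏ : ℂ)) * ((inner ℝ ξ y : ℝ) : ℂ)) *
        Complex.exp (-((ε:ℂ) + Complex.I) * ((‖y‖^2:ℝ):ℂ) / (2*(ℏ:ℂ))) *
        (starRingEnd ℂ) (gwin ℏ q (y - x))
      = C * ∏ j, Complex.exp (-(bC ℏ ε q j) * ((y j:ℝ):ℂ)^2 + cC ℏ q x ξ j * ((y j:ℝ):ℂ) + dC ℏ q x j) := by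
    intro y
    rw [gwin_conj ℏ hℏ]
    unfold gwin
    rw [hC_real ℏ hℏ]
    rw [← Complex.exp_sum]
    have hstep : ∀ A B D S : ℂ, A + B + D = S →
        Complex.exp A * Complex.exp B * (C * Complex.exp D) = C * Complex.exp S := by
      intro A B D S h
      rw [← h, Complex.exp_add, Complex.exp_add]; ring
    apply hstep
    have hin : (inner ℝ ξ y : ℝ) = ∑ j, ξ j * y j := by
      simp [PiLp.inner_apply, RCLike.inner_apply, conj_trivial, mul_comm]
    have hnorm : ‖y‖^2 = ∑ j, y j * y j := by
      rw [EuclideanSpace.norm_sq_eq]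
      simp [Real.norm_eq_abs, sq_abs, sq]
    have hsub : ∀ j, (y - x) j = y j - x j := fun j => rfl
    rw [hin, hnorm]
    simp only [hsub]
    push_cast
    simp only [Finset.mul_sum, Finset.sum_mul, neg_div, Finset.sum_div, ← Finset.sum_neg_distrib]
    rw [← Finset.sum_add_distrib, ← Finset.sum_add_distrib]
    apply Finset.sum_congr rfl
    intro j _
    unfold bC cC dC
    push_cast
    field_simp
    ring
  -- step 2: compute the integral
  unfold STFT
  rw [hC_real ℏ hℏ]
  simp only [hint]
  rw [MeasureTheory.integral_const_mul]
  congr 1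
  have hmp := (EuclideanSpace.volume_preserving_symm_measurableEquiv_toLp (Fin n)).symm
  rw [← hmp.integral_comp (MeasurableEquiv.measurableEmbedding _)]
  have hco : ∀ v : Fin n → ℝ,
      (∏ j, Complex.exp (-(bC ℏ ε q j) * ((((MeasurableEquiv.toLp 2 (Fin n → ℝ)).symm.symm v) j:ℝ):ℂ)^2
        + cC ℏ q x ξ j * ((((MeasurableEquiv.toLp 2 (Fin n → ℝ)).symm.symm v) j:ℝ):ℂ) + dC ℏ q x j))
      = ∏ j, Complex.exp (-(bC ℏ ε q j) * ((v j:ℝ):ℂ)^2 + cC ℏ q x ξ j * ((v j:ℝ):ℂ) + dC ℏ q x j) := by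
    intro v; rfl
  rw [show (fun v : Fin n → ℝ => ∏ j, Complex.exp (-(bC ℏ ε q j) * ((((MeasurableEquiv.toLp 2 (Fin n → ℝ)).symm.symm v) j:ℝ):ℂ)^2
        + cC ℏ q x ξ j * ((((MeasurableEquiv.toLp 2 (Fin n → ℝ)).symm.symm v) j:ℝ):ℂ) + dC ℏ q x j))
      = fun v : Fin n → ℝ => ∏ j, Complex.exp (-(bC ℏ ε q j) * ((v j:ℝ):ℂ)^2 + cC ℏ q x ξ j * ((v j:ℝ):ℂ) + dC ℏ q x j)
    from funext hco]
  rw [MeasureTheory.integral_fintype_prod_volume_eq_prod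
    (f := fun j (t:ℝ) => Complex.exp (-(bC ℏ ε q j) * ((t:ℝ):ℂ)^2 + cC ℏ q x ξ j * ((t:ℝ):ℂ) + dC ℏ q x j))]
  congr 1
  apply Finset.prod_congr rfl
  intro j _
  rw [integral_cexp_quadratic (hbre j) (cC ℏ q x ξ j) (dC ℏ q x j)]
  rw [neg_neg]

end Part2

def psi (ℏ ε qj : ℝ) (s t : ℝ) : ℝ :=
  (2*Real.pi*ℏ)⁻¹ * Real.sqrt (2*Real.pi*ℏ / Real.sqrt ((qj+ε)^2+1)) *
    Real.exp (((qj^2*s^2 - t^2)*(qj+ε) - 2*qj*s*t) / (2*ℏ*((qj+ε)^2+1)) - qj*s^2/(2*ℏ))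

lemma re_div_aux (p u v : ℝ) : ((((u:ℝ):ℂ) - (v:ℂ)*Complex.I)^2 / ((p:ℂ)+Complex.I)).re
    = ((u^2 - v^2)*p - 2*u*v) / (p^2+1) := by
  rw [Complex.div_re]
  simp [Complex.normSq_apply, pow_two, Complex.mul_re, Complex.mul_im]
  ring

section Part2b
variable (ℏ : ℝ) (hℏ : 0 < ℏ) {n : ℕ} (q : Fin n → ℝ) (ε : ℝ) (hε : 0 < ε)

include hℏ hε in
lemma stft_norm (hq : ∀ j, 0 < q j) (x ξ : Ed n) :
    ‖STFT ℏ (gwin ℏ q) (fun y => Complex.exp (-((ε:ℂ) + Complex.I) * ((‖y‖^2:ℝ):ℂ) / (2*(ℏ:ℂ)))) x ξ‖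
    = ∏ j, psi ℏ ε (q j) (x j) (ξ j) := by
  have h2πℏ : (0:ℝ) < 2*Real.pi*ℏ := by positivity
  rw [stft_eq ℏ hℏ q ε hε hq x ξ]
  rw [norm_mul, norm_mul, norm_prod]
  have hCnorm : ‖((((2*Real.pi*ℏ) ^ (-(n:ℝ)/2) : ℝ)):ℂ)‖ = (2*Real.pi*ℏ) ^ (-(n:ℝ)/2) := by
    rw [Complex.norm_real]
    exact abs_of_nonneg (Real.rpow_nonneg h2πℏ.le _)
  rw [hCnorm]
  -- per-factor norms
  have hfac : ∀ j : Fin n, ‖((Real.pi:ℂ) / bC ℏ ε q j)^((1:ℂ)/2) *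
      Complex.exp (dC ℏ q x j - (cC ℏ q x ξ j)^2 / (4 * (-(bC ℏ ε q j))))‖
      = Real.sqrt (2*Real.pi*ℏ / Real.sqrt ((q j+ε)^2+1)) *
        Real.exp (((q j^2*(x j)^2 - (ξ j)^2)*(q j+ε) - 2*(q j)*(x j)*(ξ j))
          / (2*ℏ*((q j+ε)^2+1)) - q j*(x j)^2/(2*ℏ)) := by
    intro j
    rw [norm_mul]
    congr 1
    · -- cpow factor
      rw [show ((1:ℂ)/2) = (((1:ℝ)/2 : ℝ):ℂ) by norm_num,
        norm_cpow_real, norm_div]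
      have habs : ‖bC ℏ ε q j‖ = (2*ℏ)⁻¹ * Real.sqrt ((q j+ε)^2+1) := by
        unfold bC
        rw [norm_mul]
        rw [Complex.norm_real, Real.norm_eq_abs, _root_.abs_of_nonneg (by positivity : (0:ℝ) ≤ (2*ℏ)⁻¹)]
        congr 1
        rw [Complex.norm_def, Complex.normSq_apply]
        simp
        ring_nf
      rw [habs, Complex.norm_real, Real.norm_eq_abs, _root_.abs_of_nonneg Real.pi_pos.le]
      have hs : (0:ℝ) < Real.sqrt ((q j+ε)^2+1) := Real.sqrt_pos.2 (by positivity)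
      have hbase : Real.pi / ((2*ℏ)⁻¹ * Real.sqrt ((q j+ε)^2+1))
          = 2*Real.pi*ℏ / Real.sqrt ((q j+ε)^2+1) := by
        field_simp
      rw [hbase]
      simp only [Real.sqrt_eq_rpow]
    · -- exp factor
      rw [Complex.norm_exp]
      congr 1
      have hne : ((q j:ℂ)+(ε:ℂ)+Complex.I) ≠ 0 := by
        intro h
        have := congrArg Complex.im h
        simpa using this
      have hℏ' : (ℏ:ℂ) ≠ 0 := Complex.ofReal_ne_zero.2 hℏ.ne'
      have hbne : bC ℏ ε q j ≠ 0 := by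
        unfold bC
        exact mul_ne_zero (Complex.ofReal_ne_zero.2 (by positivity)) hne
      have h4 : (4:ℂ) * (-(bC ℏ ε q j)) ≠ 0 := by
        exact mul_ne_zero (by norm_num) (neg_ne_zero.2 hbne)
      have key : (cC ℏ q x ξ j)^2 / (4 * (-(bC ℏ ε q j)))
          = -((((2*ℏ)⁻¹:ℝ):ℂ) *
            (((((q j * x j : ℝ)):ℂ) - ((ξ j:ℝ):ℂ)*Complex.I)^2 / (((q j + ε:ℝ):ℂ)+Complex.I))) := by
        rw [div_eq_iff h4]
        unfold bC cC
        push_cast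
        field_simp
        ring
      have hsplit : dC ℏ q x j - (cC ℏ q x ξ j)^2 / (4 * (-(bC ℏ ε q j)))
          = dC ℏ q x j + (((2*ℏ)⁻¹:ℝ):ℂ) *
            (((((q j * x j : ℝ)):ℂ) - ((ξ j:ℝ):ℂ)*Complex.I)^2 / (((q j + ε:ℝ):ℂ)+Complex.I)) := by
        rw [sub_eq_add_neg, key, neg_neg]
      rw [hsplit, Complex.add_re, Complex.re_ofReal_mul, re_div_aux]
      unfold dC
      rw [Complex.re_ofReal_mul]
      have : (-(q j:ℂ)*((x j:ℝ):ℂ)^2).re = -(q j)*(x j)^2 := by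
        simp [← Complex.ofReal_pow]
      rw [this]
      have hB : (0:ℝ) < (q j+ε)^2+1 := by positivity
      field_simp
      ring
  rw [Finset.prod_congr rfl (fun j _ => hfac j)]
  -- combine the constants
  have hcc : (2*Real.pi*ℏ) ^ (-(n:ℝ)/2) * (2*Real.pi*ℏ) ^ (-(n:ℝ)/2) = ((2*Real.pi*ℏ)⁻¹)^n := by
    rw [← Real.rpow_add h2πℏ]
    rw [show -(n:ℝ)/2 + -(n:ℝ)/2 = -(n:ℝ) by ring]
    rw [Real.rpow_neg h2πℏ.le, Real.rpow_natCast, inv_pow]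
  rw [← mul_assoc, hcc]
  unfold psi
  simp only [Finset.prod_mul_distrib, Finset.prod_const, Finset.card_univ, Fintype.card_fin]
  ring

end Part2b

def psimax (ℏ ε qj t : ℝ) : ℝ :=
  (2*Real.pi*ℏ)⁻¹ * Real.sqrt (2*Real.pi*ℏ / Real.sqrt ((qj+ε)^2+1)) *
    Real.exp (-(ε * t^2) / (2*ℏ*(1+ε*(qj+ε))))

section Part2c
variable (ℏ : ℝ) (hℏ : 0 < ℏ) {n : ℕ} (q : Fin n → ℝ) (ε : ℝ) (hε : 0 < ε)

include hℏ hε in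
lemma psi_le_psimax (qj : ℝ) (hqj : 0 < qj) (s t : ℝ) : psi ℏ ε qj s t ≤ psimax ℏ ε qj t := by
  unfold psi psimax
  have h2πℏ : (0:ℝ) < 2*Real.pi*ℏ := mul_pos (mul_pos two_pos Real.pi_pos) hℏ
  have hB : (0:ℝ) < (qj+ε)^2+1 := by positivity
  have hP : (0:ℝ) < 1+ε*(qj+ε) := by nlinarith
  apply mul_le_mul_of_nonneg_left _ (mul_nonneg (inv_pos.2 h2πℏ).le (Real.sqrt_nonneg _))
  rw [Real.exp_le_exp]
  have key : -(ε * t^2) / (2*ℏ*(1+ε*(qj+ε)))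
      - (((qj^2*s^2 - t^2)*(qj+ε) - 2*qj*s*t) / (2*ℏ*((qj+ε)^2+1)) - qj*s^2/(2*ℏ))
      = qj * (((1+ε*(qj+ε))*s + t)^2) / (2*ℏ*((qj+ε)^2+1)*(1+ε*(qj+ε))) := by
    field_simp
    ring
  nlinarith [key, div_nonneg (mul_nonneg hqj.le (sq_nonneg ((1+ε*(qj+ε))*s + t)))
    (by positivity : (0:ℝ) ≤ 2*ℏ*((qj+ε)^2+1)*(1+ε*(qj+ε)))]

include hℏ hε in
lemma psi_max_attained (qj : ℝ) (hqj : 0 < qj) (t : ℝ) :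
    psi ℏ ε qj (-t/(1+ε*(qj+ε))) t = psimax ℏ ε qj t := by
  unfold psi psimax
  have hB : (0:ℝ) < (qj+ε)^2+1 := by positivity
  have hP : (0:ℝ) < 1+ε*(qj+ε) := by nlinarith
  congr 1
  congr 1
  field_simp
  ring

include hℏ hε in
lemma stft_sup (hq : ∀ j, 0 < q j) (ξ : Ed n) :
    (⨆ x : Ed n, (‖STFT ℏ (gwin ℏ q)
        (fun y => Complex.exp (-((ε:ℂ) + Complex.I) * ((‖y‖^2:ℝ):ℂ) / (2*(ℏ:ℂ)))) x ξ‖₊ : ℝ≥0∞))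
    = ENNReal.ofReal (∏ j, psimax ℏ ε (q j) (ξ j)) := by
  have h2πℏ : (0:ℝ) < 2*Real.pi*ℏ := mul_pos (mul_pos two_pos Real.pi_pos) hℏ
  have hpsinn : ∀ (qj s t : ℝ), 0 ≤ psi ℏ ε qj s t := by
    intro qj s t
    exact mul_nonneg (mul_nonneg (inv_pos.2 h2πℏ).le (Real.sqrt_nonneg _)) (Real.exp_pos _).le
  apply le_antisymm
  · apply iSup_le
    intro x
    rw [← enorm_eq_nnnorm, ← ofReal_norm, stft_norm ℏ hℏ q ε hε hq x ξ]
    apply ENNReal.ofReal_le_ofReal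
    exact Finset.prod_le_prod (fun j _ => hpsinn _ _ _)
      (fun j _ => psi_le_psimax ℏ hℏ ε hε (q j) (hq j) (x j) (ξ j))
  · set x0 : Ed n := (WithLp.equiv 2 (Fin n → ℝ)).symm (fun j => -(ξ j)/(1+ε*(q j+ε))) with hx0
    have hval : ENNReal.ofReal (∏ j, psimax ℏ ε (q j) (ξ j))
        = (‖STFT ℏ (gwin ℏ q)
          (fun y => Complex.exp (-((ε:ℂ) + Complex.I) * ((‖y‖^2:ℝ):ℂ) / (2*(ℏ:ℂ)))) x0 ξ‖₊ : ℝ≥0∞) := by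
      rw [← enorm_eq_nnnorm, ← ofReal_norm, stft_norm ℏ hℏ q ε hε hq x0 ξ]
      congr 1
      apply Finset.prod_congr rfl
      intro j _
      have hx0j : x0 j = -(ξ j)/(1+ε*(q j+ε)) := by
        rw [hx0]; rfl
      rw [hx0j, ← psi_max_attained ℏ hℏ ε hε (q j) (hq j) (ξ j)]
    rw [hval]
    exact le_iSup (fun x : Ed n => (‖STFT ℏ (gwin ℏ q)
      (fun y => Complex.exp (-((ε:ℂ) + Complex.I) * ((‖y‖^2:ℝ):ℂ) / (2*(ℏ:ℂ)))) x ξ‖₊ : ℝ≥0∞)) x0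

end Part2c

lemma final_alg (ℏ qj ε : ℝ) (hℏ : 0 < ℏ) (hqj : 0 < qj) (hε : 0 < ε) :
    (2*Real.pi*ℏ)⁻¹ * Real.sqrt (2*Real.pi*ℏ / Real.sqrt ((qj+ε)^2+1)) *
      Real.sqrt (Real.pi / (ε/(2*ℏ*(1+ε*(qj+ε)))))
    = ((qj+ε)^2+1) ^ ((1:ℝ)/4) *
      ((1+ε*(qj+ε))/(ε*(qj^2+2*qj*ε+1+ε^2))) ^ ((1:ℝ)/2) := by
  have hB : (0:ℝ) < (qj+ε)^2+1 := by positivity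
  have hP : (0:ℝ) < 1+ε*(qj+ε) := by positivity
  have h2πℏ : (0:ℝ) < 2*Real.pi*ℏ := by positivity
  have hS : (0:ℝ) < Real.sqrt ((qj+ε)^2+1) := Real.sqrt_pos.2 hB
  have hform : qj^2+2*qj*ε+1+ε^2 = (qj+ε)^2+1 := by ring
  rw [hform]
  rw [show ((1:ℝ)/4) = (1/2)*(1/2) by norm_num, Real.rpow_mul hB.le, ← Real.sqrt_eq_rpow,
    ← Real.sqrt_eq_rpow, ← Real.sqrt_eq_rpow]
  have hBS : (qj+ε)^2+1 = Real.sqrt ((qj+ε)^2+1) * Real.sqrt ((qj+ε)^2+1) :=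
    (Real.mul_self_sqrt hB.le).symm
  set S := Real.sqrt ((qj+ε)^2+1) with hSdef
  rw [mul_assoc, ← Real.sqrt_mul (div_nonneg h2πℏ.le hS.le)]
  rw [show (2*Real.pi*ℏ)⁻¹ = Real.sqrt ((2*Real.pi*ℏ)⁻¹ * (2*Real.pi*ℏ)⁻¹) from
    (Real.sqrt_mul_self (inv_nonneg.2 h2πℏ.le)).symm]
  rw [← Real.sqrt_mul (mul_nonneg (inv_nonneg.2 h2πℏ.le) (inv_nonneg.2 h2πℏ.le))]
  rw [← Real.sqrt_mul hS.le]
  congr 1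
  rw [hBS]
  field_simp

section Part2d
variable (ℏ : ℝ) (hℏ : 0 < ℏ) {n : ℕ} (q : Fin n → ℝ) (ε : ℝ) (hε : 0 < ε)

include hℏ hε in
lemma msjo_eq (hq : ∀ j, 0 < q j) :
    Msjo ℏ (gwin ℏ q) (fun y => Complex.exp (-((ε:ℂ) + Complex.I) * ((‖y‖^2:ℝ):ℂ) / (2*(ℏ:ℂ))))
      = ENNReal.ofReal (∏ j, ((q j + ε) ^ 2 + 1) ^ ((1 : ℝ) / 4) *
        ((1 + ε * (q j + ε)) / (ε * ((q j) ^ 2 + 2 * q j * ε + 1 + ε ^ 2))) ^ ((1 : ℝ) / 2)) := by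
  have h2πℏ : (0:ℝ) < 2*Real.pi*ℏ := by positivity
  unfold Msjo
  rw [lintegral_congr (fun ξ => stft_sup ℏ hℏ q ε hε hq ξ)]
  have hk : ∀ j : Fin n, (0:ℝ) < ε/(2*ℏ*(1+ε*(q j+ε))) := by
    intro j
    have := hq j
    have hP : (0:ℝ) < 1+ε*(q j+ε) := by nlinarith
    positivity
  have hfun : ∀ j : Fin n, (fun t:ℝ => psimax ℏ ε (q j) t)
      = fun t:ℝ => ((2*Real.pi*ℏ)⁻¹ * Real.sqrt (2*Real.pi*ℏ / Real.sqrt ((q j+ε)^2+1))) *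
        Real.exp (-(ε/(2*ℏ*(1+ε*(q j+ε)))) * t^2) := by
    intro j
    funext t
    unfold psimax
    congr 1
    congr 1
    ring
  have hint1 : ∀ j : Fin n, Integrable (fun t:ℝ => psimax ℏ ε (q j) t) := by
    intro j
    rw [hfun j]
    exact (integrable_exp_neg_mul_sq (hk j)).const_mul _
  have hInt : Integrable (fun ξ : Ed n => ∏ j, psimax ℏ ε (q j) (ξ j)) volume := by
    have hmp := (EuclideanSpace.volume_preserving_symm_measurableEquiv_toLp (Fin n)).symm
    rw [← hmp.integrable_comp_emb (MeasurableEquiv.measurableEmbedding _)]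
    exact Integrable.fintype_prod (f := fun j (t:ℝ) => psimax ℏ ε (q j) t) hint1
  have hnn : 0 ≤ᵐ[volume] (fun ξ : Ed n => ∏ j, psimax ℏ ε (q j) (ξ j)) := by
    filter_upwards with ξ
    apply Finset.prod_nonneg
    intro j _
    exact mul_nonneg (mul_nonneg (inv_pos.2 h2πℏ).le (Real.sqrt_nonneg _)) (Real.exp_pos _).le
  rw [← MeasureTheory.ofReal_integral_eq_lintegral_ofReal hInt hnn]
  congr 1
  have hmp := (EuclideanSpace.volume_preserving_symm_measurableEquiv_toLp (Fin n)).symm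
  rw [← hmp.integral_comp (MeasurableEquiv.measurableEmbedding _)]
  have : (fun v : Fin n → ℝ => ∏ j, psimax ℏ ε (q j)
      (((MeasurableEquiv.toLp 2 (Fin n → ℝ)).symm.symm v) j))
      = fun v : Fin n → ℝ => ∏ j, psimax ℏ ε (q j) (v j) := by
    funext v; rfl
  rw [this]
  rw [MeasureTheory.integral_fintype_prod_volume_eq_prod (f := fun j (t:ℝ) => psimax ℏ ε (q j) t)]
  apply Finset.prod_congr rfl
  intro j _
  rw [hfun j, MeasureTheory.integral_const_mul, integral_gaussian]
  exact final_alg ℏ (q j) ε hℏ (hq j) hε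

end Part2d

/-- Gaussian test functions — exact Fresnel integral and exact
`M^{∞,1}` norm with Gaussian window. -/
theorem fresnel_gaussian_lower_bound (ℏ : ℝ) (hℏ : 0 < ℏ) (n : ℕ)
    (q : Fin n → ℝ) (hq : ∀ j, 0 < q j) (ε : ℝ) (hε : 0 < ε)
    (f : Ed n → ℂ)
    (hf : f = fun x => Complex.exp (-((ε : ℂ) + Complex.I) * ((‖x‖ ^ 2 : ℝ) : ℂ) /
      (2 * (ℏ : ℂ)))) :
    (∀ φ : SchwartzMap (Ed n) ℂ, φ 0 = 1 →
      Tendsto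
        (fun ε' : ℝ =>
          (((2 * Real.pi : ℝ) : ℂ) * Complex.I * (ℏ : ℂ)) ^ (-(n : ℂ) / 2) *
            ∫ x : Ed n,
              Complex.exp (Complex.I * ((‖x‖ ^ 2 : ℝ) : ℂ) / (2 * (ℏ : ℂ))) *
                f x * φ (ε' • x))
        (𝓝[>] (0 : ℝ)) (𝓝 ((Complex.I * (ε : ℂ)) ^ (-(n : ℂ) / 2)))) ∧
    Msjo ℏ (gwin ℏ q) f =
      ENNReal.ofReal (∏ j, ((q j + ε) ^ 2 + 1) ^ ((1 : ℝ) / 4) *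
        ((1 + ε * (q j + ε)) / (ε * ((q j) ^ 2 + 2 * q j * ε + 1 + ε ^ 2))) ^
          ((1 : ℝ) / 2)) := by
  constructor
  · intro φ hφ
    exact part1 ℏ hℏ n ε hε f hf φ hφ
  · rw [hf]
    exact msjo_eq ℏ hℏ q ε hε hq
end
end

section
/- Consistency of the M^{∞,1} norm under cylindrical extension: let m ≤ n, q₁,…,q_n > 0, and g_k(x) = (2πℏ)^{-k/2} e^{-∑_{j=1}^{k} q_j x_j²/(2ℏ)} for x ∈ ℝ^k. For f_m ∈ M^{∞,1}(ℝ^m), define its extension E_m^n f_m(x₁,…,x_n) = f_m(x₁,…,x_m). Then ‖E_m^n f_m‖_{M^{∞,1}_{(g_n)}(ℝⁿ)} = ‖f_m‖_{M^{∞,1}_{(g_m)}(ℝ^m)}. -/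
open MeasureTheory Complex Filter
open scoped RealInnerProductSpace ENNReal Topology

noncomputable section

/-! ### Auxiliary machinery -/

section Split

def splitE (m k n : ℕ) (h : m + k = n) : Fin m ⊕ Fin k ≃ Fin n :=
  finSumFinEquiv.trans (finCongr h)

def splitM (m k n : ℕ) (h : m + k = n) : Ed n ≃ᵐ (Ed m × (Fin k → ℝ)) :=
  (MeasurableEquiv.toLp 2 (Fin n → ℝ)).symm.trans <|
    ((MeasurableEquiv.piCongrLeft (fun _ : Fin n => ℝ) (splitE m k n h)).symm).trans <|
      (MeasurableEquiv.sumPiEquivProdPi (fun _ => ℝ)).trans <|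
        (MeasurableEquiv.prodCongr (MeasurableEquiv.toLp 2 (Fin m → ℝ)).symm.symm
          (MeasurableEquiv.refl _))

lemma splitM_mp (m k n : ℕ) (h : m + k = n) :
    MeasurePreserving (splitM m k n h) volume volume :=
  (((MeasurePreserving.symm _ (EuclideanSpace.volume_preserving_symm_measurableEquiv_toLp (Fin m))).prod
      (MeasurePreserving.id volume)).comp
    ((volume_measurePreserving_sumPiEquivProdPi (fun _ => ℝ)).comp
      ((MeasurePreserving.symm _ (volume_measurePreserving_piCongrLeft (fun _ : Fin n => ℝ)
          (splitE m k n h))).comp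
        (EuclideanSpace.volume_preserving_symm_measurableEquiv_toLp (Fin n)))))

lemma splitM_fst (m k n : ℕ) (h : m + k = n) (x : Ed n) (i : Fin m) :
    (splitM m k n h x).1 i = x (splitE m k n h (Sum.inl i)) := rfl

lemma splitM_snd (m k n : ℕ) (h : m + k = n) (x : Ed n) (j : Fin k) :
    (splitM m k n h x).2 j = x (splitE m k n h (Sum.inr j)) := rfl

lemma splitE_inl (m k n : ℕ) (h : m + k = n) (hmn : m ≤ n) (i : Fin m) :
    splitE m k n h (Sum.inl i) = Fin.castLE hmn i := by
  ext; simp [splitE]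

lemma sum_split {m k n : ℕ} (h : m + k = n) (f : Fin n → ℝ) :
    ∑ i, f i = (∑ i : Fin m, f (splitE m k n h (Sum.inl i))) +
      ∑ j : Fin k, f (splitE m k n h (Sum.inr j)) := by
  rw [← Equiv.sum_comp (splitE m k n h) f, Fintype.sum_sum_type]

end Split

section Basic

lemma cpow_neg_nat_half (x : ℝ) (hx : 0 < x) (d : ℕ) :
    (x:ℂ) ^ (-(d:ℂ)/2) = ((x ^ (-(d:ℝ)/2) : ℝ) : ℂ) := by
  rw [Complex.ofReal_cpow hx.le]
  norm_num

lemma gwin_eq_ofReal {ℏ : ℝ} (hℏ : 0 < ℏ) {n : ℕ} (q : Fin n → ℝ) (x : Ed n) :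
    gwin ℏ q x = (((2*Real.pi*ℏ) ^ (-(n:ℝ)/2) *
      Real.exp (-(∑ j, q j * (x j)^2)/(2*ℏ)) : ℝ) : ℂ) := by
  have hπ := Real.pi_pos
  rw [gwin, cpow_neg_nat_half _ (by positivity)]
  rw [Complex.ofReal_mul, Complex.ofReal_exp]
  congr 1
  push_cast
  ring_nf

/-- the one-dimensional Gaussian kernel appearing as extra factor -/
def Hfun (ℏ qj τ : ℝ) : ℝ :=
  (2*Real.pi*ℏ)⁻¹ * Real.sqrt (2*Real.pi*ℏ/qj) * Real.exp (-(τ^2/(2*ℏ*qj)))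

lemma Hfun_nonneg {ℏ qj : ℝ} (hℏ : 0 < ℏ) (hq : 0 < qj) (τ : ℝ) : 0 ≤ Hfun ℏ qj τ := by
  have := Real.pi_pos
  unfold Hfun
  positivity

lemma Hfun_continuous (ℏ qj : ℝ) : Continuous (Hfun ℏ qj) := by
  unfold Hfun; fun_prop

lemma integrable_Hfun {ℏ qj : ℝ} (hℏ : 0 < ℏ) (hq : 0 < qj) :
    Integrable (Hfun ℏ qj) := by
  have h1 : (0:ℝ) < 2*ℏ*qj := by positivity
  have : Integrable (fun τ : ℝ => Real.exp (-(2*ℏ*qj)⁻¹ * τ^2)) :=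
    integrable_exp_neg_mul_sq (by positivity)
  refine (this.const_mul ((2*Real.pi*ℏ)⁻¹ * Real.sqrt (2*Real.pi*ℏ/qj))).congr ?_
  filter_upwards with τ
  rw [Hfun]
  congr 1
  ring

lemma integral_Hfun {ℏ qj : ℝ} (hℏ : 0 < ℏ) (hq : 0 < qj) :
    ∫ τ : ℝ, Hfun ℏ qj τ = 1 := by
  have hπ := Real.pi_pos
  have h1 : (0:ℝ) < 2*ℏ*qj := by positivity
  have : ∫ τ : ℝ, Hfun ℏ qj τ =
      (2*Real.pi*ℏ)⁻¹ * Real.sqrt (2*Real.pi*ℏ/qj) * ∫ τ : ℝ, Real.exp (-(2*ℏ*qj)⁻¹ * τ^2) := by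
    rw [← integral_const_mul]
    congr 1 with τ
    rw [Hfun]
    congr 2
    ring
  rw [this, integral_gaussian]
  have h2 : Real.pi / (2*ℏ*qj)⁻¹ = Real.pi * (2*ℏ*qj) := by field_simp
  rw [h2, mul_assoc, ← Real.sqrt_mul (by positivity)]
  have h3 : 2*Real.pi*ℏ/qj * (Real.pi * (2*ℏ*qj)) = (2*Real.pi*ℏ)^2 := by field_simp
  rw [h3, Real.sqrt_sq (by positivity)]
  field_simp

/-- the extra factor of the STFT in one extra dimension -/
def quadFactor (ℏ qj a τ : ℝ) : ℂ :=
  ((2*Real.pi*ℏ : ℝ) : ℂ)⁻¹ *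
    ∫ t : ℝ, Complex.exp (-(Complex.I/ℏ) * (τ * t)) *
      Complex.exp (-((qj * (t-a)^2 : ℝ) : ℂ) / (2*ℏ))

lemma quadFactor_eval {ℏ qj : ℝ} (hℏ : 0 < ℏ) (hq : 0 < qj) (a τ : ℝ) :
    quadFactor ℏ qj a τ =
      ((Hfun ℏ qj τ : ℝ) : ℂ) * Complex.exp (-(Complex.I/ℏ) * (τ * a)) := by
  have hπ := Real.pi_pos
  have hℏ' : (ℏ:ℂ) ≠ 0 := Complex.ofReal_ne_zero.2 hℏ.ne'
  have hq' : (qj:ℂ) ≠ 0 := Complex.ofReal_ne_zero.2 hq.ne'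
  have hb : (-(qj/(2*ℏ)) : ℂ).re < 0 := by
    simp only [← Complex.ofReal_ofNat, ← Complex.ofReal_mul, ← Complex.ofReal_div,
      ← Complex.ofReal_neg, Complex.ofReal_re]
    have : (0:ℝ) < qj/(2*ℏ) := by positivity
    linarith
  have key : ∀ t : ℝ,
      Complex.exp (-(Complex.I/ℏ) * (τ * t)) *
        Complex.exp (-((qj * (t-a)^2 : ℝ) : ℂ) / (2*ℏ)) =
      Complex.exp ((-(qj/(2*ℏ)) : ℂ) * t^2 +
        ((qj*a - Complex.I*τ)/ℏ) * t + (-(qj*a^2/(2*ℏ)))) := by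
    intro t
    rw [← Complex.exp_add]
    congr 1
    push_cast
    field_simp
    ring
  unfold quadFactor
  simp_rw [key]
  rw [integral_cexp_quadratic hb]
  have hπb : (↑Real.pi / -(-(↑qj / (2 * ↑ℏ))) : ℂ) = ((2*Real.pi*ℏ/qj : ℝ) : ℂ) := by
    push_cast
    field_simp
  rw [hπb]
  have hcpow : ((2*Real.pi*ℏ/qj : ℝ) : ℂ) ^ (1/2 : ℂ) =
      ((Real.sqrt (2*Real.pi*ℏ/qj) : ℝ) : ℂ) := by
    rw [Real.sqrt_eq_rpow, Complex.ofReal_cpow (by positivity)]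
    norm_num
  rw [hcpow]
  have hexp : (-(↑qj * ↑a ^ 2 / (2 * ↑ℏ)) - ((↑qj * ↑a - Complex.I * ↑τ) / ↑ℏ) ^ 2 /
        (4 * -(↑qj / (2 * ↑ℏ))) : ℂ) =
      (-(τ^2/(2*ℏ*qj)) : ℝ) + -(Complex.I/ℏ) * (τ * a) := by
    have hI : Complex.I^2 = -1 := Complex.I_sq
    push_cast
    field_simp
    ring_nf
    rw [hI]
    ring
  rw [hexp, Complex.exp_add]
  simp only [Hfun, Complex.ofReal_mul, Complex.ofReal_inv, Complex.ofReal_exp]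
  push_cast
  ring_nf

lemma norm_quadFactor {ℏ qj : ℝ} (hℏ : 0 < ℏ) (hq : 0 < qj) (a τ : ℝ) :
    ‖quadFactor ℏ qj a τ‖ = Hfun ℏ qj τ := by
  rw [quadFactor_eval hℏ hq, norm_mul, Complex.norm_real,
    Real.norm_of_nonneg (Hfun_nonneg hℏ hq τ)]
  have : (-(Complex.I/ℏ) * (τ * a) : ℂ).re = 0 := by
    simp [Complex.mul_re, Complex.div_re]
  rw [Complex.norm_exp, this, Real.exp_zero, mul_one]

end Basic

/-- Tonelli-type lemma for a product where one factor need not be measurable. -/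
lemma lintegral_prod_mul_of_prob {α β : Type*} [MeasurableSpace α] [MeasurableSpace β]
    (μ : Measure α) (ν : Measure β) [SigmaFinite μ] [SigmaFinite ν]
    (S : α → ℝ≥0∞) {H : β → ℝ≥0∞} (hH : Measurable H) (hH1 : ∫⁻ y, H y ∂ν = 1) :
    ∫⁻ p : α × β, S p.1 * H p.2 ∂(μ.prod ν) = ∫⁻ x, S x ∂μ := by
  apply le_antisymm
  · obtain ⟨G, hGm, hGle, hGeq⟩ :=
      exists_measurable_le_lintegral_eq (μ.prod ν) (fun p => S p.1 * H p.2)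
    rw [hGeq, lintegral_prod _ hGm.aemeasurable]
    have step : ∀ x, ∫⁻ y, G (x, y) ∂ν ≤ S x := by
      intro x
      rcases eq_or_ne (S x) ⊤ with hx | hx
      · rw [hx]; exact le_top
      · calc ∫⁻ y, G (x, y) ∂ν ≤ ∫⁻ y, S x * H y ∂ν :=
              lintegral_mono fun y => hGle (x, y)
          _ = S x := by rw [lintegral_const_mul' _ _ hx, hH1, mul_one]
    exact lintegral_mono step
  · obtain ⟨g, hgm, hgle, hgeq⟩ := exists_measurable_le_lintegral_eq μ S
    rw [hgeq, ← mul_one (∫⁻ a, g a ∂μ), ← hH1,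
      ← lintegral_prod_mul hgm.aemeasurable hH.aemeasurable]
    exact lintegral_mono fun p => mul_le_mul_left (hgle p.1) _

section Main

variable {ℏ : ℝ} {m k n : ℕ} (h : m + k = n) (hmn : m ≤ n) {q : Fin n → ℝ} {fm : Ed m → ℂ}

/-- Pointwise factorization of the STFT of a cylindrical extension. -/
lemma STFT_split (hℏ : 0 < ℏ) (hq : ∀ j, 0 < q j) (x ξ : Ed n) :
    STFT ℏ (gwin ℏ q) (fun y : Ed n => fm (WithLp.toLp 2 (fun i => y (Fin.castLE hmn i)))) x ξ =
      STFT ℏ (gwin ℏ (fun i : Fin m => q (Fin.castLE hmn i))) fm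
        ((splitM m k n h x).1) ((splitM m k n h ξ).1) *
      ∏ j : Fin k, quadFactor ℏ (q (splitE m k n h (Sum.inr j)))
        ((splitM m k n h x).2 j) ((splitM m k n h ξ).2 j) := by
  have hπ := Real.pi_pos
  have h2πℏ : (0:ℝ) < 2*Real.pi*ℏ := by positivity
  set σ := splitM m k n h with hσ
  set e := splitE m k n h with he
  set x' := (σ x).1
  set x'' := (σ x).2
  set ξ' := (σ ξ).1
  set ξ'' := (σ ξ).2
  set qm : Fin m → ℝ := fun i => q (Fin.castLE hmn i) with hqmdef
  set qk : Fin k → ℝ := fun j => q (e (Sum.inr j)) with hqkdef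
  set A : Ed m → ℂ := fun u =>
    Complex.exp (-(Complex.I/ℏ) * ((inner ℝ ξ' u : ℝ) : ℂ)) * fm u *
      (starRingEnd ℂ) (gwin ℏ qm (u - x')) with hA
  set bI : Fin k → ℝ → ℂ := fun j t =>
    Complex.exp (-(Complex.I/ℏ) * ((ξ'' j : ℝ) * t)) *
      Complex.exp (-((qk j * (t - x'' j)^2 : ℝ) : ℂ) / (2*ℏ)) with hbI
  set B : (Fin k → ℝ) → ℂ := fun v =>
    (((2*Real.pi*ℏ) ^ (-(k:ℝ)/2) : ℝ) : ℂ) * ∏ j, bI j (v j) with hB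
  set Φ : Ed n → ℂ := fun y =>
    Complex.exp (-(Complex.I/ℏ) * ((inner ℝ ξ y : ℝ) : ℂ)) *
      fm (WithLp.toLp 2 (fun i => y (Fin.castLE hmn i))) * (starRingEnd ℂ) (gwin ℏ q (y - x)) with hΦ
  have hAB : ∀ p : Ed m × (Fin k → ℝ), Φ (σ.symm p) = A p.1 * B p.2 := by
    rintro ⟨u, v⟩
    have hyp : σ (σ.symm (u, v)) = (u, v) := σ.apply_symm_apply _
    set y := σ.symm (u, v) with hydef
    have hy1 : ∀ i, y (e (Sum.inl i)) = u i := by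
      intro i
      rw [← splitM_fst m k n h y i, ← hσ, hyp]
    have hy2 : ∀ j, y (e (Sum.inr j)) = v j := by
      intro j
      rw [← splitM_snd m k n h y j, ← hσ, hyp]
    have hinner : (inner ℝ ξ y : ℝ) = (inner ℝ ξ' u : ℝ) + ∑ j, ξ'' j * v j := by
      simp only [PiLp.inner_apply, RCLike.inner_apply, conj_trivial]
      rw [sum_split h (fun i => y i * ξ i), ← he]
      congr 1
      · exact Finset.sum_congr rfl fun i _ => by rw [hy1 i]; rfl
      · exact Finset.sum_congr rfl fun j _ => by rw [hy2 j, mul_comm]; rfl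
    have hfm : fm (WithLp.toLp 2 (fun i => y (Fin.castLE hmn i))) = fm u := by
      congr 1
      ext i; show y (Fin.castLE hmn i) = u i
      rw [← splitE_inl m k n h hmn i, ← he, hy1 i]
    have hgwin : gwin ℏ q (y - x) = gwin ℏ qm (u - x') *
        (((2*Real.pi*ℏ) ^ (-(k:ℝ)/2) *
          Real.exp (-(∑ j, qk j * (v j - x'' j)^2)/(2*ℏ)) : ℝ) : ℂ) := by
      rw [gwin_eq_ofReal hℏ, gwin_eq_ofReal hℏ]
      rw [← Complex.ofReal_mul]
      congr 1
      have hsum : (∑ i, q i * ((y - x) i)^2) =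
          (∑ i, qm i * ((u - x') i)^2) + ∑ j, qk j * (v j - x'' j)^2 := by
        rw [sum_split h (fun i => q i * ((y - x) i)^2), ← he]
        congr 1
        · apply Finset.sum_congr rfl
          intro i _
          have h1 : (y - x) (e (Sum.inl i)) = (u - x') i := by
            simp only [PiLp.sub_apply]
            rw [hy1 i]; rfl
          have h2 : q (e (Sum.inl i)) = qm i := by
            rw [he, splitE_inl m k n h hmn i]
          rw [h1, h2]
        · apply Finset.sum_congr rfl
          intro j _
          have h1 : (y - x) (e (Sum.inr j)) = v j - x'' j := by
            simp only [PiLp.sub_apply]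
            rw [hy2 j]; rfl
          rw [h1]
      rw [hsum]
      have hrpow : (2*Real.pi*ℏ) ^ (-(n:ℝ)/2) =
          (2*Real.pi*ℏ) ^ (-(m:ℝ)/2) * (2*Real.pi*ℏ) ^ (-(k:ℝ)/2) := by
        rw [← Real.rpow_add h2πℏ]
        congr 1
        have : (n:ℝ) = (m:ℝ) + (k:ℝ) := by exact_mod_cast h.symm
        rw [this]; ring
      rw [hrpow]
      rw [show (-((∑ i, qm i * ((u - x') i)^2) + ∑ j, qk j * (v j - x'' j)^2)/(2*ℏ)) =
        (-(∑ i, qm i * ((u - x') i)^2)/(2*ℏ)) + (-(∑ j, qk j * (v j - x'' j)^2)/(2*ℏ)) by ring]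
      rw [Real.exp_add]
      ring

    have hosc : Complex.exp (-(Complex.I/ℏ) * ((∑ j, ξ'' j * v j : ℝ) : ℂ)) =
        ∏ j, Complex.exp (-(Complex.I/ℏ) * ((ξ'' j : ℂ) * (v j : ℂ))) := by
      rw [← Complex.exp_sum, ← Finset.mul_sum]
      congr 1
      congr 1
      push_cast
      rfl
    have hgauss : Complex.exp (((-(∑ j, qk j * (v j - x'' j)^2)/(2*ℏ) : ℝ)) : ℂ) =
        ∏ j, Complex.exp (-((qk j * (v j - x'' j)^2 : ℝ) : ℂ) / (2*(ℏ:ℂ))) := by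
      rw [← Complex.exp_sum]
      congr 1
      rw [show (-(∑ j, qk j * (v j - x'' j)^2)/(2*ℏ) : ℝ) =
        ∑ j, (-(qk j * (v j - x'' j)^2)/(2*ℏ)) by
          rw [← Finset.sum_neg_distrib, ← Finset.sum_div]]
      push_cast
      rfl
    show Φ y = A u * B v
    rw [hΦ]
    simp only
    rw [hinner, hfm, hgwin, map_mul, Complex.conj_ofReal, Complex.ofReal_mul,
      Complex.ofReal_add, mul_add, Complex.exp_add, Complex.ofReal_exp, hosc, hgauss,
      hA, hB, hbI]
    simp only
    rw [Finset.prod_mul_distrib]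
    ring
  have hσmp : MeasurePreserving (σ.symm) volume volume :=
    MeasurePreserving.symm _ (splitM_mp m k n h)
  have hint : (∫ y : Ed n, Φ y) = (∫ u, A u) * ∫ v, B v := by
    rw [← hσmp.integral_comp (MeasurableEquiv.measurableEmbedding _) Φ]
    simp only [hAB]
    rw [Measure.volume_eq_prod, integral_prod_mul]
  have hbj : ∀ j, (∫ t : ℝ, bI j t) =
      ((2*Real.pi*ℏ : ℝ) : ℂ) * quadFactor ℏ (qk j) (x'' j) (ξ'' j) := by
    intro j
    rw [quadFactor, ← mul_assoc, mul_inv_cancel₀ (Complex.ofReal_ne_zero.2 h2πℏ.ne'),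
      one_mul]
  have hBint : (∫ v, B v) = (((2*Real.pi*ℏ) ^ (-(k:ℝ)/2) : ℝ) : ℂ) *
      (((2*Real.pi*ℏ : ℝ) : ℂ) ^ (k:ℕ) *
        ∏ j, quadFactor ℏ (qk j) (x'' j) (ξ'' j)) := by
    rw [hB]
    rw [MeasureTheory.integral_const_mul]
    rw [volume_pi, integral_fintype_prod_eq_prod (f := bI)]
    simp_rw [hbj]
    rw [Finset.prod_mul_distrib, Finset.prod_const, Finset.card_univ, Fintype.card_fin]
  have hconst : (((2 * Real.pi * ℏ : ℝ) : ℂ)) ^ (-(n : ℂ) / 2) *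
      ((((2*Real.pi*ℏ) ^ (-(k:ℝ)/2) : ℝ) : ℂ) * ((2*Real.pi*ℏ : ℝ) : ℂ) ^ (k:ℕ)) =
      (((2 * Real.pi * ℏ : ℝ) : ℂ)) ^ (-(m : ℂ) / 2) := by
    rw [cpow_neg_nat_half _ h2πℏ n, cpow_neg_nat_half _ h2πℏ m, ← Complex.ofReal_pow,
      ← Complex.ofReal_mul, ← Complex.ofReal_mul]
    congr 1
    rw [← Real.rpow_natCast _ k, ← Real.rpow_add h2πℏ, ← Real.rpow_add h2πℏ]
    congr 1
    have hn : (n:ℝ) = (m:ℝ) + (k:ℝ) := by exact_mod_cast h.symm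
    rw [hn]; ring
  show (((2 * Real.pi * ℏ : ℝ) : ℂ)) ^ (-(n : ℂ) / 2) * (∫ y : Ed n, Φ y) = _
  rw [hint, hBint]
  calc (((2 * Real.pi * ℏ : ℝ) : ℂ)) ^ (-(n : ℂ) / 2) *
        ((∫ u, A u) * ((((2*Real.pi*ℏ) ^ (-(k:ℝ)/2) : ℝ) : ℂ) *
          (((2*Real.pi*ℏ : ℝ) : ℂ) ^ (k:ℕ) * ∏ j, quadFactor ℏ (qk j) (x'' j) (ξ'' j))))
      = ((((2 * Real.pi * ℏ : ℝ) : ℂ)) ^ (-(n : ℂ) / 2) *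
          ((((2*Real.pi*ℏ) ^ (-(k:ℝ)/2) : ℝ) : ℂ) * ((2*Real.pi*ℏ : ℝ) : ℂ) ^ (k:ℕ))) *
          (∫ u, A u) * ∏ j, quadFactor ℏ (qk j) (x'' j) (ξ'' j) := by ring
    _ = _ := by
      rw [hconst]
      rfl

/-- Norm-level factorization. -/
lemma enorm_STFT_split (hℏ : 0 < ℏ) (hq : ∀ j, 0 < q j) (x ξ : Ed n) :
    (‖STFT ℏ (gwin ℏ q) (fun y : Ed n => fm (WithLp.toLp 2 (fun i => y (Fin.castLE hmn i)))) x ξ‖₊ : ℝ≥0∞) =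
      (‖STFT ℏ (gwin ℏ (fun i : Fin m => q (Fin.castLE hmn i))) fm
        ((splitM m k n h x).1) ((splitM m k n h ξ).1)‖₊ : ℝ≥0∞) *
      ∏ j : Fin k, ENNReal.ofReal (Hfun ℏ (q (splitE m k n h (Sum.inr j)))
        ((splitM m k n h ξ).2 j)) := by
  rw [STFT_split h hmn hℏ hq x ξ, nnnorm_mul, ENNReal.coe_mul]
  congr 1
  rw [← enorm_eq_nnnorm, ← ofReal_norm, norm_prod, ENNReal.ofReal_prod_of_nonneg
    (fun j _ => norm_nonneg _)]
  exact Finset.prod_congr rfl fun j _ => by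
    rw [norm_quadFactor hℏ (hq _)]

/-- Supremum-level factorization. -/
lemma sup_STFT_split (hℏ : 0 < ℏ) (hq : ∀ j, 0 < q j) (ξ : Ed n) :
    (⨆ x : Ed n, (‖STFT ℏ (gwin ℏ q)
        (fun y : Ed n => fm (WithLp.toLp 2 (fun i => y (Fin.castLE hmn i)))) x ξ‖₊ : ℝ≥0∞)) =
      (⨆ x' : Ed m, (‖STFT ℏ (gwin ℏ (fun i : Fin m => q (Fin.castLE hmn i))) fm
        x' ((splitM m k n h ξ).1)‖₊ : ℝ≥0∞)) *
      ∏ j : Fin k, ENNReal.ofReal (Hfun ℏ (q (splitE m k n h (Sum.inr j)))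
        ((splitM m k n h ξ).2 j)) := by
  set σ := splitM m k n h with hσ
  calc (⨆ x : Ed n, (‖STFT ℏ (gwin ℏ q)
        (fun y : Ed n => fm (WithLp.toLp 2 (fun i => y (Fin.castLE hmn i)))) x ξ‖₊ : ℝ≥0∞))
      = ⨆ p : Ed m × (Fin k → ℝ), (‖STFT ℏ (gwin ℏ q)
          (fun y : Ed n => fm (WithLp.toLp 2 (fun i => y (Fin.castLE hmn i)))) (σ.symm p) ξ‖₊ : ℝ≥0∞) :=
        (Equiv.iSup_comp σ.symm.toEquiv).symm
    _ = ⨆ p : Ed m × (Fin k → ℝ),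
          (‖STFT ℏ (gwin ℏ (fun i : Fin m => q (Fin.castLE hmn i))) fm
            p.1 ((σ ξ).1)‖₊ : ℝ≥0∞) *
          ∏ j : Fin k, ENNReal.ofReal (Hfun ℏ (q (splitE m k n h (Sum.inr j)))
            ((σ ξ).2 j)) := by
        refine iSup_congr fun p => ?_
        rw [enorm_STFT_split h hmn hℏ hq (σ.symm p) ξ, ← hσ, σ.apply_symm_apply]
    _ = ⨆ u : Ed m, ⨆ _v : Fin k → ℝ,
          (‖STFT ℏ (gwin ℏ (fun i : Fin m => q (Fin.castLE hmn i))) fm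
            u ((σ ξ).1)‖₊ : ℝ≥0∞) *
          ∏ j : Fin k, ENNReal.ofReal (Hfun ℏ (q (splitE m k n h (Sum.inr j)))
            ((σ ξ).2 j)) := iSup_prod
    _ = _ := by
        simp only [iSup_const]
        rw [ENNReal.iSup_mul]

end Main

/-- the `M^{∞,1}` norm with Gaussian windows is consistent under
cylindrical extension: `‖E_m^n f_m‖_{M^{∞,1}_{(g_n)}(ℝⁿ)} = ‖f_m‖_{M^{∞,1}_{(g_m)}(ℝ^m)}`. -/
theorem Msjo_cylindrical_extension_consistency (ℏ : ℝ) (hℏ : 0 < ℏ)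
    (m n : ℕ) (hmn : m ≤ n) (q : Fin n → ℝ) (hq : ∀ j, 0 < q j)
    (fm : Ed m → ℂ) (hfc : Continuous fm)
    (hfM : Msjo ℏ (gwin ℏ (fun i : Fin m => q (Fin.castLE hmn i))) fm ≠ ⊤) :
    Msjo ℏ (gwin ℏ q)
        (fun x : Ed n => fm (show Ed m from WithLp.toLp 2 (fun i : Fin m => x (Fin.castLE hmn i)))) =
      Msjo ℏ (gwin ℏ (fun i : Fin m => q (Fin.castLE hmn i))) fm := by
  obtain ⟨k, h⟩ : ∃ k, m + k = n := ⟨n - m, by omega⟩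
  set S : Ed m → ℝ≥0∞ := fun ξ' =>
    ⨆ x' : Ed m, (‖STFT ℏ (gwin ℏ (fun i : Fin m => q (Fin.castLE hmn i))) fm x' ξ'‖₊ : ℝ≥0∞)
    with hS
  set HH : (Fin k → ℝ) → ℝ≥0∞ := fun v =>
    ∏ j : Fin k, ENNReal.ofReal (Hfun ℏ (q (splitE m k n h (Sum.inr j))) (v j)) with hHH
  have hHHm : Measurable HH := by
    refine Finset.measurable_prod _ fun j _ => ?_
    exact ENNReal.measurable_ofReal.comp
      ((Hfun_continuous _ _).measurable.comp (measurable_pi_apply j))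
  have hHH1 : ∫⁻ v, HH v = 1 := by
    have heq : ∀ v : Fin k → ℝ, HH v =
        ENNReal.ofReal (∏ j, Hfun ℏ (q (splitE m k n h (Sum.inr j))) (v j)) := fun v =>
      (ENNReal.ofReal_prod_of_nonneg (fun j _ => Hfun_nonneg hℏ (hq _) _)).symm
    rw [lintegral_congr heq]
    have hint : Integrable (fun v : Fin k → ℝ =>
        ∏ j, Hfun ℏ (q (splitE m k n h (Sum.inr j))) (v j)) :=
      Integrable.fintype_prod (f := fun j => Hfun ℏ (q (splitE m k n h (Sum.inr j))))
        (fun j => integrable_Hfun hℏ (hq _))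
    rw [← ofReal_integral_eq_lintegral_ofReal hint
      (Filter.Eventually.of_forall fun v =>
        Finset.prod_nonneg fun j _ => Hfun_nonneg hℏ (hq _) _)]
    rw [volume_pi, integral_fintype_prod_eq_prod
      (f := fun j => Hfun ℏ (q (splitE m k n h (Sum.inr j))))]
    rw [Finset.prod_congr rfl fun j _ => integral_Hfun hℏ (hq _), Finset.prod_const_one]
    exact ENNReal.ofReal_one
  calc Msjo ℏ (gwin ℏ q)
        (fun x : Ed n => fm (show Ed m from WithLp.toLp 2 (fun i : Fin m => x (Fin.castLE hmn i))))
      = ∫⁻ ξ : Ed n, S ((splitM m k n h ξ).1) * HH ((splitM m k n h ξ).2) :=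
        lintegral_congr fun ξ => sup_STFT_split h hmn hℏ hq ξ
    _ = ∫⁻ p : Ed m × (Fin k → ℝ), S p.1 * HH p.2 :=
        (splitM_mp m k n h).lintegral_comp_emb
          (MeasurableEquiv.measurableEmbedding _) (fun p => S p.1 * HH p.2)
    _ = ∫⁻ ξ' : Ed m, S ξ' := by
        rw [Measure.volume_eq_prod]
        exact lintegral_prod_mul_of_prob _ _ S hHHm hHH1
    _ = Msjo ℏ (gwin ℏ (fun i : Fin m => q (Fin.castLE hmn i))) fm := rfl

end
end
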